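/- arXiv:2505.06769 — 6 statements merged into one kernel-verified Lean document; each statement's English description precedes it below -/
import Mathlib

section
/- Let M be a Markov chain with targets T and weight function w : T → [0,∞) in which every state can reach T along edges; let s ∉ T, and let γ, ε ∈ ℝ with ε > 0 and γ − ε ≥ 0. Then for every state s' ∈ S with s' ≠ s: val_{M[s=γ]}(s') = val_{M[s=γ−ε]}(s') + ε · P_{s'}(∃ t ≥ 0 : X_t = s), where val_{M[s=γ]} and val_{M[s=γ−ε]} are the weighted reachability value vectors of the respective reduced MCs, and the probability of ever visiting s is taken in M. -/
/-- A finite Markov chain: transition function `δ` (nonnegative, rows sum to 1)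
together with a set `T` of absorbing target states. There is an edge `s → s'`
iff `δ s s' > 0`. -/
structure MC (S : Type) [Fintype S] [DecidableEq S] where
  δ : S → S → ℝ
  T : Finset S
  nonneg : ∀ s s' : S, 0 ≤ δ s s'
  rowsum : ∀ s : S, ∑ s' : S, δ s s' = 1
  absorbing : ∀ t ∈ T, δ t t = 1

variable {S : Type} [Fintype S] [DecidableEq S]

/-- Edge relation of a Markov chain: `s → s'` iff `δ s s' > 0`. -/
def MC.edge (M : MC S) (a b : S) : Prop := 0 < M.δ a b

/-- `pathLen r n a b`: there is a path of length `n` from `a` to `b` along `r`. -/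
def pathLen (r : S → S → Prop) : ℕ → S → S → Prop
  | 0 => fun a b => a = b
  | n + 1 => fun a c => ∃ b, r a b ∧ pathLen r n b c

/-- `reaches r A s`: `s` can reach the set `A` along the relation `r`. -/
def reaches (r : S → S → Prop) (A : Set S) (s : S) : Prop :=
  ∃ n, ∃ a ∈ A, pathLen r n s a

/-- Length of a shortest path from `s` to the set `A` along `r`. -/
noncomputable def distTo (r : S → S → Prop) (A : Set S) (s : S) : ℕ :=
  sInf {n | ∃ a ∈ A, pathLen r n s a}

/-- Level `0`: the targets together with all states that cannot reach the targets. -/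
def MC.level0 (M : MC S) : Set S :=
  {s | s ∈ M.T ∨ ¬ reaches M.edge (M.T : Set S) s}

/-- The levels of a Markov chain: `ℓ_0` is `level0`, and for `i ≥ 1`, `ℓ_i` is the
set of states whose shortest edge-path distance to `ℓ_0` is exactly `i`. -/
noncomputable def MC.levelSet (M : MC S) : ℕ → Set S
  | 0 => M.level0
  | i + 1 => {s | distTo M.edge M.level0 s = i + 1}

/-- `M` has (exactly) `k` levels: `ℓ_k` is the last nonempty level. -/
def MC.hasLevels (M : MC S) (k : ℕ) : Prop :=
  (M.levelSet k).Nonempty ∧ ∀ i, k < i → M.levelSet i = ∅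

/-- One-step transition matrix of the Markov chain. -/
noncomputable def MC.P (M : MC S) : Matrix S S ℝ := Matrix.of M.δ

/-- Weighted reachability value `val(s) = E_s[w(X_{t*}) · 1{t* < ∞}]`, where `t*` is
the first hitting time of `T`. Since `T` is absorbing, this equals the supremum
(monotone limit) over `n` of `∑_{t ∈ T} (δⁿ)(s,t)·w(t)`. -/
noncomputable def MC.reachVal (M : MC S) (w : S → ℝ) (s : S) : ℝ :=
  ⨆ n : ℕ, ∑ t ∈ M.T, (M.P ^ n) s t * w t

/-- Stochastic shortest path value `val(s) = E_s[∑_{t=0}^{t*} w(X_t)]`, where `t*` is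
the first hitting time of `T`: the expected weight collected strictly before `T`
(states outside `T`, counted via the `n`-step distributions) plus the expected weight
of the first target state hit. -/
noncomputable def MC.sspVal (M : MC S) (w : S → ℝ) (s : S) : ℝ :=
  (∑' n : ℕ, ∑ s' ∈ Finset.univ.filter (fun x => x ∉ M.T), (M.P ^ n) s s' * w s')
    + M.reachVal w s

/-- Smallest positive transition probability of the Markov chain. -/
noncomputable def MC.pmin (M : MC S) : ℝ :=
  sInf {p : ℝ | 0 < p ∧ ∃ s s' : S, M.δ s s' = p}

/-- Reachability Bellman update. -/
noncomputable def MC.reachUpdate (M : MC S) (w : S → ℝ) (v : S → ℝ) : S → ℝ :=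
  fun s => if s ∈ M.T then w s else ∑ s' : S, M.δ s s' * v s'

/-- SSP Bellman update. -/
noncomputable def MC.sspUpdate (M : MC S) (w : S → ℝ) (v : S → ℝ) : S → ℝ :=
  fun s => if s ∈ M.T then w s else w s + ∑ s' : S, M.δ s s' * v s'

/-- The reduced Markov chain `M[s = ·]`: the state `s` is made absorbing (its row of
`δ` replaced by the point mass at `s`) and added to the target set. -/
def MC.reduce (M : MC S) (s : S) : MC S where
  δ := fun a b => if a = s then (if b = s then 1 else 0) else M.δ a b
  T := insert s M.T
  nonneg := by
    intro a b
    by_cases h : a = s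
    · by_cases h' : b = s <;> simp [h, h']
    · simpa [h] using M.nonneg a b
  rowsum := by
    intro a
    by_cases h : a = s
    · simp [h]
    · simpa [h] using M.rowsum a
  absorbing := by
    intro t ht
    rcases Finset.mem_insert.mp ht with h | h
    · simp [h]
    · by_cases h' : t = s
      · simp [h']
      · simpa [h'] using M.absorbing t h

/-- Probability, in `M`, of ever visiting the state `s` when starting from `a`,
i.e. `P_a(∃ t ≥ 0, X_t = s)` (computed as a reachability value after making `s`
absorbing, which does not change the dynamics before the first visit to `s`). -/
noncomputable def MC.hitProb (M : MC S) (a s : S) : ℝ :=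
  (M.reduce s).reachVal (fun b => if b = s then 1 else 0) a

/-- Probability of having reached `T` within `i` steps, `P_s(∃ t ≤ i, X_t ∈ T)`;
since `T` is absorbing this equals `∑_{t ∈ T} (δ^i)(s,t)`. -/
noncomputable def MC.hitBy (M : MC S) (s : S) (i : ℕ) : ℝ :=
  ∑ t ∈ M.T, (M.P ^ i) s t

lemma MC.P_pow_nonneg (N : MC S) (n : ℕ) (a b : S) : 0 ≤ (N.P ^ n) a b := by
  induction n generalizing a b with
  | zero =>
    simp only [pow_zero, Matrix.one_apply]
    split <;> norm_num
  | succ n ih =>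
    rw [pow_succ, Matrix.mul_apply]
    exact Finset.sum_nonneg fun c _ => mul_nonneg (ih a c) (N.nonneg c b)

lemma MC.P_pow_rowsum (N : MC S) (n : ℕ) (a : S) : ∑ b : S, (N.P ^ n) a b = 1 := by
  induction n generalizing a with
  | zero => simp [Matrix.one_apply]
  | succ n ih =>
    simp only [pow_succ, Matrix.mul_apply]
    rw [Finset.sum_comm]
    calc ∑ c : S, ∑ b : S, (N.P ^ n) a c * N.P c b
        = ∑ c : S, (N.P ^ n) a c * ∑ b : S, N.δ c b := by
          simp [Finset.mul_sum, MC.P]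
      _ = 1 := by simp only [N.rowsum, mul_one]; exact ih a

lemma MC.P_pow_le_one (N : MC S) (n : ℕ) (a b : S) : (N.P ^ n) a b ≤ 1 := by
  calc (N.P ^ n) a b ≤ ∑ c : S, (N.P ^ n) a c :=
        Finset.single_le_sum (fun c _ => N.P_pow_nonneg n a c) (Finset.mem_univ b)
    _ = 1 := N.P_pow_rowsum n a

lemma MC.P_pow_mono (N : MC S) {t : S} (ht : t ∈ N.T) (a : S) :
    Monotone fun n => (N.P ^ n) a t := by
  refine monotone_nat_of_le_succ fun n => ?_
  rw [pow_succ, Matrix.mul_apply]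
  calc (N.P ^ n) a t = (N.P ^ n) a t * N.P t t := by
        show _ = _ * N.δ t t
        rw [N.absorbing t ht, mul_one]
    _ ≤ ∑ c : S, (N.P ^ n) a c * N.P c t :=
        Finset.single_le_sum
          (fun c _ => mul_nonneg (N.P_pow_nonneg n a c) (N.nonneg c t))
          (Finset.mem_univ t)

lemma MC.reachVal_tendsto (N : MC S) (w' : S → ℝ) (hw' : ∀ t ∈ N.T, 0 ≤ w' t) (a : S) :
    Filter.Tendsto (fun n => ∑ t ∈ N.T, (N.P ^ n) a t * w' t)
      Filter.atTop (nhds (N.reachVal w' a)) := by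
  have hmono : Monotone fun n => ∑ t ∈ N.T, (N.P ^ n) a t * w' t := by
    intro m n hmn
    exact Finset.sum_le_sum fun t ht =>
      mul_le_mul_of_nonneg_right (N.P_pow_mono ht a hmn) (hw' t ht)
  have hbdd : BddAbove (Set.range fun n => ∑ t ∈ N.T, (N.P ^ n) a t * w' t) := by
    refine ⟨∑ t ∈ N.T, w' t, ?_⟩
    rintro x ⟨n, rfl⟩
    exact Finset.sum_le_sum fun t ht => by
      nlinarith [N.P_pow_le_one n a t, N.P_pow_nonneg n a t, hw' t ht]
  exact tendsto_atTop_ciSup hmono hbdd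

/-- Sensitivity of reachability values of reduced chains in the guess:
for every state `s' ≠ s`,
`val_{M[s=γ]}(s') = val_{M[s=γ-ε]}(s') + ε · P_{s'}(∃ t ≥ 0, X_t = s)`. -/
theorem stmt_8 {S : Type} [Fintype S] [DecidableEq S] [Nonempty S]
    (M : MC S) (hreach : ∀ a : S, reaches M.edge (M.T : Set S) a)
    (w : S → ℝ) (hw : ∀ t ∈ M.T, 0 ≤ w t)
    (s : S) (hs : s ∉ M.T) (γ ε : ℝ) (hε : 0 < ε) (hγε : 0 ≤ γ - ε) :
    ∀ s' : S, s' ≠ s →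
      (M.reduce s).reachVal (Function.update w s γ) s'
        = (M.reduce s).reachVal (Function.update w s (γ - ε)) s'
          + ε * M.hitProb s' s := by
  intro s' hs'
  set N := M.reduce s with hN
  have hsT : s ∈ N.T := Finset.mem_insert_self s M.T
  have hγ : 0 ≤ γ := by linarith
  have hwγ : ∀ t ∈ N.T, 0 ≤ Function.update w s γ t := by
    intro t ht
    rcases Finset.mem_insert.mp ht with h | h
    · subst h; simp [hγ]
    · have htne : t ≠ s := fun h' => hs (h' ▸ h)
      simpa [Function.update_of_ne htne] using hw t h
  have hwγε : ∀ t ∈ N.T, 0 ≤ Function.update w s (γ - ε) t := by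
    intro t ht
    rcases Finset.mem_insert.mp ht with h | h
    · subst h; simp [hγε]
    · have htne : t ≠ s := fun h' => hs (h' ▸ h)
      simpa [Function.update_of_ne htne] using hw t h
  have hw1 : ∀ t ∈ N.T, (0:ℝ) ≤ if t = s then 1 else 0 := by
    intro t _; split <;> norm_num
  have h1 := N.reachVal_tendsto (Function.update w s γ) hwγ s'
  have h2 := N.reachVal_tendsto (Function.update w s (γ - ε)) hwγε s'
  have h3 := N.reachVal_tendsto (fun b => if b = s then 1 else 0) hw1 s'
  have hkey : ∀ n : ℕ,
      ∑ t ∈ N.T, (N.P ^ n) s' t * Function.update w s γ t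
        = ∑ t ∈ N.T, (N.P ^ n) s' t * Function.update w s (γ - ε) t
          + ε * ∑ t ∈ N.T, (N.P ^ n) s' t * (if t = s then 1 else 0) := by
    intro n
    have hTins : N.T = insert s M.T := rfl
    rw [hTins, Finset.sum_insert hs, Finset.sum_insert hs, Finset.sum_insert hs]
    have hrest : ∀ (c : ℝ), ∑ t ∈ M.T, (N.P ^ n) s' t * Function.update w s c t
        = ∑ t ∈ M.T, (N.P ^ n) s' t * w t := by
      intro c
      refine Finset.sum_congr rfl fun t ht => ?_
      have htne : t ≠ s := by rintro rfl; exact hs ht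
      rw [Function.update_of_ne htne]
    rw [hrest, hrest]
    have hzero : ∑ t ∈ M.T, (N.P ^ n) s' t * (if t = s then 1 else 0) = 0 := by
      refine Finset.sum_eq_zero fun t ht => ?_
      have htne : t ≠ s := by rintro rfl; exact hs ht
      rw [if_neg htne, mul_zero]
    rw [hzero]
    simp only [Function.update_self, if_pos rfl, eq_self_iff_true, if_true, mul_one]
    ring
  have h2' : Filter.Tendsto
      (fun n => ∑ t ∈ N.T, (N.P ^ n) s' t * Function.update w s γ t)
      Filter.atTop
      (nhds (N.reachVal (Function.update w s (γ - ε)) s'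
        + ε * N.reachVal (fun b => if b = s then 1 else 0) s')) := by
    have := h2.add ((h3.const_mul ε))
    simpa only [← hkey] using this
  have := tendsto_nhds_unique h1 h2'
  simpa [MC.hitProb, hN] using this
end

section
/- Let M be a Markov chain with targets T and weight function w : S → (0,∞) in which every state can reach T along edges; let s ∉ T, and let γ, ε ∈ ℝ with ε > 0 and γ − ε > 0. Then for every state s' ∈ S with s' ≠ s: val_{M[s=γ]}(s') = val_{M[s=γ−ε]}(s') + ε · P_{s'}(∃ t ≥ 0 : X_t = s), where val_{M[s=γ]} and val_{M[s=γ−ε]} are the stochastic shortest path (SSP) value vectors of the respective reduced MCs, and the probability of ever visiting s is taken in M. -/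
variable {S : Type} [Fintype S] [DecidableEq S]

lemma MC.pow_apply_nonneg (M : MC S) (n : ℕ) (a b : S) : 0 ≤ (M.P ^ n) a b := by
  induction n generalizing b with
  | zero => by_cases h : a = b <;> simp [Matrix.one_apply, h]
  | succ n ih =>
    rw [pow_succ, Matrix.mul_apply]
    exact Finset.sum_nonneg fun x _ => mul_nonneg (ih x) (M.nonneg x b)

lemma MC.pow_rowsum (M : MC S) (n : ℕ) (a : S) : ∑ b, (M.P ^ n) a b = 1 := by
  induction n with
  | zero => simp [Matrix.one_apply]
  | succ n ih =>
    simp only [pow_succ, Matrix.mul_apply]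
    rw [Finset.sum_comm]
    have : ∀ x : S, ∑ b, (M.P ^ n) a x * M.P x b = (M.P ^ n) a x := by
      intro x
      rw [← Finset.mul_sum]
      have : ∑ b, M.P x b = 1 := M.rowsum x
      rw [this, mul_one]
    simp only [this]
    exact ih

lemma MC.pow_apply_le_one (M : MC S) (n : ℕ) (a b : S) : (M.P ^ n) a b ≤ 1 := by
  calc (M.P ^ n) a b ≤ ∑ b', (M.P ^ n) a b' :=
        Finset.single_le_sum (fun i _ => M.pow_apply_nonneg n a i) (Finset.mem_univ b)
    _ = 1 := M.pow_rowsum n a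

lemma MC.pow_target_mono (M : MC S) {t : S} (ht : t ∈ M.T) (a : S) :
    Monotone fun n => (M.P ^ n) a t := by
  apply monotone_nat_of_le_succ
  intro n
  rw [pow_succ, Matrix.mul_apply]
  have h1 : (M.P ^ n) a t * M.P t t ≤ ∑ x, (M.P ^ n) a x * M.P x t :=
    Finset.single_le_sum
      (f := fun x => (M.P ^ n) a x * M.P x t)
      (fun i _ => mul_nonneg (M.pow_apply_nonneg n a i) (M.nonneg i t))
      (Finset.mem_univ t)
  have h2 : M.P t t = 1 := M.absorbing t ht
  calc (M.P ^ n) a t = (M.P ^ n) a t * M.P t t := by rw [h2, mul_one]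
    _ ≤ _ := h1

lemma MC.reach_mono (M : MC S) (w' : S → ℝ) (hw' : ∀ t, 0 ≤ w' t) (a : S) :
    Monotone fun n => ∑ t ∈ M.T, (M.P ^ n) a t * w' t := by
  intro n m hnm
  exact Finset.sum_le_sum fun t ht =>
    mul_le_mul_of_nonneg_right (M.pow_target_mono ht a hnm) (hw' t)

lemma MC.reach_bdd (M : MC S) (w' : S → ℝ) (hw' : ∀ t, 0 ≤ w' t) (a : S) :
    BddAbove (Set.range fun n => ∑ t ∈ M.T, (M.P ^ n) a t * w' t) := by
  refine ⟨∑ t ∈ M.T, w' t, ?_⟩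
  rintro x ⟨n, rfl⟩
  exact Finset.sum_le_sum fun t _ =>
    mul_le_of_le_one_left (hw' t) (M.pow_apply_le_one n a t)

lemma MC.reach_tendsto (M : MC S) (w' : S → ℝ) (hw' : ∀ t, 0 ≤ w' t) (a : S) :
    Filter.Tendsto (fun n => ∑ t ∈ M.T, (M.P ^ n) a t * w' t) Filter.atTop
      (nhds (⨆ n, ∑ t ∈ M.T, (M.P ^ n) a t * w' t)) :=
  tendsto_atTop_ciSup (M.reach_mono w' hw' a) (M.reach_bdd w' hw' a)

/-- Sensitivity of SSP values of reduced chains in the guess: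
for every state `s' ≠ s`,
`val_{M[s=γ]}(s') = val_{M[s=γ-ε]}(s') + ε · P_{s'}(∃ t ≥ 0, X_t = s)`,
where the values are the stochastic shortest path values of the reduced chains. -/
theorem stmt_9 {S : Type} [Fintype S] [DecidableEq S] [Nonempty S]
    (M : MC S) (hreach : ∀ a : S, reaches M.edge (M.T : Set S) a)
    (w : S → ℝ) (hw : ∀ a : S, 0 < w a)
    (s : S) (hs : s ∉ M.T) (γ ε : ℝ) (hε : 0 < ε) (hγε : 0 < γ - ε) :
    ∀ s' : S, s' ≠ s →
      (M.reduce s).sspVal (Function.update w s γ) s'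
        = (M.reduce s).sspVal (Function.update w s (γ - ε)) s'
          + ε * M.hitProb s' s := by
  intro s' _
  set N := M.reduce s with hNdef
  have hsT : s ∈ N.T := Finset.mem_insert_self s M.T
  have hγ : 0 < γ := by linarith
  -- weight nonnegativity
  have hw1 : ∀ t, 0 ≤ Function.update w s γ t := by
    intro t
    by_cases h : t = s
    · subst h; rw [Function.update_self]; exact le_of_lt hγ
    · rw [Function.update_of_ne h]; exact le_of_lt (hw t)
  have hw2 : ∀ t, 0 ≤ Function.update w s (γ - ε) t := by
    intro t
    by_cases h : t = s
    · subst h; rw [Function.update_self]; exact le_of_lt hγε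
    · rw [Function.update_of_ne h]; exact le_of_lt (hw t)
  have hwg : ∀ t : S, 0 ≤ (if t = s then (1:ℝ) else 0) := by
    intro t; by_cases h : t = s <;> simp [h]
  -- the three sequences
  set f := fun n => ∑ t ∈ N.T, (N.P ^ n) s' t * Function.update w s (γ - ε) t with hf
  set g := fun n => ∑ t ∈ N.T, (N.P ^ n) s' t * (if t = s then (1:ℝ) else 0) with hg
  set h := fun n => ∑ t ∈ N.T, (N.P ^ n) s' t * Function.update w s γ t with hh
  have key : ∀ n, h n = f n + ε * g n := by
    intro n
    rw [hf, hg, hh]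
    rw [Finset.mul_sum, ← Finset.sum_add_distrib]
    apply Finset.sum_congr rfl
    intro t _
    by_cases ht : t = s
    · subst ht
      rw [Function.update_self, Function.update_self, if_pos rfl]
      ring
    · rw [Function.update_of_ne ht, Function.update_of_ne ht, if_neg ht]
      ring
  -- limits
  have tf := N.reach_tendsto _ hw2 s'
  have tg := N.reach_tendsto _ hwg s'
  have th := N.reach_tendsto _ hw1 s'
  have th' : Filter.Tendsto h Filter.atTop
      (nhds ((⨆ n, f n) + ε * (⨆ n, g n))) := by
    exact Filter.Tendsto.congr (fun n => (key n).symm) (tf.add (tg.const_mul ε))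
  have hsup : (⨆ n, h n) = (⨆ n, f n) + ε * (⨆ n, g n) :=
    tendsto_nhds_unique th th'
  -- reachVal equality
  have hR : N.reachVal (Function.update w s γ) s'
      = N.reachVal (Function.update w s (γ - ε)) s' + ε * M.hitProb s' s := by
    have hhit : M.hitProb s' s = ⨆ n, g n := rfl
    rw [hhit]
    exact hsup
  -- tsum equality
  have h1 : (∑' n : ℕ, ∑ x ∈ Finset.univ.filter (fun x => x ∉ N.T),
        (N.P ^ n) s' x * Function.update w s γ x)
      = (∑' n : ℕ, ∑ x ∈ Finset.univ.filter (fun x => x ∉ N.T),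
        (N.P ^ n) s' x * Function.update w s (γ - ε) x) := by
    apply tsum_congr
    intro n
    apply Finset.sum_congr rfl
    intro x hx
    have hxs : x ≠ s := by
      intro hc
      subst hc
      exact (Finset.mem_filter.mp hx).2 hsT
    rw [Function.update_of_ne hxs, Function.update_of_ne hxs]
  show N.sspVal (Function.update w s γ) s'
      = N.sspVal (Function.update w s (γ - ε)) s' + ε * M.hitProb s' s
  unfold MC.sspVal
  rw [h1, hR]
  ring
end

section
/- Let G be a finite directed graph on a set S of n ≥ 1 vertices and let T ⊆ S be a target set. Then there exists a set I ⊆ S \ T with |I| ≤ 9·√n such that every vertex from which T ∪ I is reachable has shortest directed-path distance at most √n to T ∪ I; equivalently, the Markov chain in which the states of I are turned into additional targets has at most √n levels. -/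
variable {S : Type} [Fintype S] [DecidableEq S]

section Aux

variable {r : S → S → Prop} {A : Set S}

lemma pathLen_append {m n : ℕ} {a b c : S} (h1 : pathLen r m a b) (h2 : pathLen r n b c) :
    pathLen r (m + n) a c := by
  induction m generalizing a with
  | zero =>
    have hab : a = b := h1
    subst hab
    rw [Nat.zero_add]; exact h2
  | succ m ih =>
    obtain ⟨x, hx, hp⟩ := h1
    rw [Nat.succ_add]
    exact ⟨x, hx, ih hp⟩

lemma pathLen_split {m n : ℕ} {a c : S} (h : pathLen r (m + n) a c) :
    ∃ b, pathLen r m a b ∧ pathLen r n b c := by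
  induction m generalizing a with
  | zero =>
    rw [Nat.zero_add] at h
    exact ⟨a, rfl, h⟩
  | succ m ih =>
    rw [Nat.succ_add] at h
    obtain ⟨x, hx, hp⟩ := h
    obtain ⟨b, hb1, hb2⟩ := ih hp
    exact ⟨b, ⟨x, hx, hb1⟩, hb2⟩

lemma reaches_of_pathLen {n : ℕ} {s v : S} (h : pathLen r n s v) (hv : reaches r A v) :
    reaches r A s := by
  obtain ⟨m, a, ha, hp⟩ := hv
  exact ⟨n + m, a, ha, pathLen_append h hp⟩

lemma distTo_le {s a : S} {n : ℕ} (ha : a ∈ A) (h : pathLen r n s a) :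
    distTo r A s ≤ n := Nat.sInf_le ⟨a, ha, h⟩

lemma distTo_spec {s : S} (h : reaches r A s) :
    ∃ a ∈ A, pathLen r (distTo r A s) s a := Nat.sInf_mem h

lemma exists_mid {s : S} (h : reaches r A s) {i : ℕ} (hi : i ≤ distTo r A s) :
    ∃ v, pathLen r i s v ∧ reaches r A v ∧ distTo r A v = distTo r A s - i := by
  obtain ⟨a, ha, hp⟩ := distTo_spec h
  set d := distTo r A s with hd
  have hp' : pathLen r (i + (d - i)) s a := by rwa [Nat.add_sub_cancel' hi]
  obtain ⟨v, h1, h2⟩ := pathLen_split hp'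
  have hrv : reaches r A v := ⟨d - i, a, ha, h2⟩
  refine ⟨v, h1, hrv, le_antisymm (distTo_le ha h2) ?_⟩
  by_contra hlt
  push_neg at hlt
  obtain ⟨a', ha', hp''⟩ := distTo_spec hrv
  have hle : d ≤ i + distTo r A v := distTo_le ha' (pathLen_append h1 hp'')
  omega

end Aux

/-- For every finite directed graph on `n ≥ 1` vertices with target
set `T`, there is a set `I` of non-target vertices with `|I| ≤ 9√n` such that every
vertex that can reach `T ∪ I` has shortest directed-path distance at most `√n` to
`T ∪ I` (equivalently: after turning the states of `I` into targets, the chain has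
at most `√n` levels). -/
theorem stmt_12 {S : Type} [Fintype S] [DecidableEq S]
    (hS : 1 ≤ Fintype.card S) (r : S → S → Prop) (T : Finset S) :
    ∃ I : Finset S, (∀ a ∈ I, a ∉ T) ∧
      (I.card : ℝ) ≤ 9 * Real.sqrt (Fintype.card S) ∧
      ∀ s : S, reaches r ((T ∪ I : Finset S) : Set S) s →
        (distTo r ((T ∪ I : Finset S) : Set S) s : ℝ) ≤ Real.sqrt (Fintype.card S) := by
  classical
  set n := Fintype.card S with hn
  set k := Nat.sqrt n with hk
  have hk1 : 1 ≤ k := by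
    have := Nat.sqrt_le_sqrt hS
    simpa [Nat.sqrt_one] using this
  -- real facts about k and √n
  have hsq : Real.sqrt n * Real.sqrt n = (n : ℝ) := Real.mul_self_sqrt (by positivity)
  have hspos : 0 < Real.sqrt n := Real.sqrt_pos.mpr (by exact_mod_cast hS)
  have hk_le : (k : ℝ) ≤ Real.sqrt n := by
    have h1 : (k : ℝ) ^ 2 ≤ n := by exact_mod_cast Nat.sqrt_le' n
    nlinarith [Real.sqrt_nonneg (n : ℝ), (by positivity : (0:ℝ) ≤ (k:ℝ))]
  have hk_ge : Real.sqrt n < (k : ℝ) + 1 := by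
    have h1 : (n : ℝ) < ((k : ℝ) + 1) ^ 2 := by
      exact_mod_cast Nat.lt_succ_sqrt' n
    nlinarith [Real.sqrt_nonneg (n : ℝ)]
  set F : Finset S := Finset.univ.filter (fun s => s ∉ T ∧ reaches r (T : Set S) s) with hF
  set g : S → ℕ := fun s => distTo r (T : Set S) s % k with hg
  have hmap : ∀ s ∈ F, g s ∈ Finset.range k :=
    fun s _ => Finset.mem_range.mpr (Nat.mod_lt _ hk1)
  have hcard : F.card = ∑ j ∈ Finset.range k, (F.filter fun s => g s = j).card :=
    Finset.card_eq_sum_card_fiberwise hmap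
  have hne : (Finset.range k).Nonempty := ⟨0, Finset.mem_range.mpr hk1⟩
  have hsum : ∑ j ∈ Finset.range k, (F.filter fun s => g s = j).card * k
      ≤ ∑ j ∈ Finset.range k, F.card := by
    rw [← Finset.sum_mul, ← hcard, Finset.sum_const, Finset.card_range, smul_eq_mul,
      Nat.mul_comm]
  obtain ⟨j, hj, hjle⟩ := Finset.exists_le_of_sum_le hne hsum
  have hjk : j < k := Finset.mem_range.mp hj
  refine ⟨F.filter (fun s => g s = j), ?_, ?_, ?_⟩
  · intro a ha
    exact ((Finset.mem_filter.mp (Finset.mem_filter.mp ha).1).2).1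
  · -- cardinality bound
    have h1 : (F.filter fun s => g s = j).card * k ≤ n := by
      calc (F.filter fun s => g s = j).card * k ≤ F.card := hjle
        _ ≤ n := by simpa [hn] using Finset.card_le_univ F
    have h1' : ((F.filter fun s => g s = j).card : ℝ) * k ≤ n := by exact_mod_cast h1
    have hk1' : (1 : ℝ) ≤ k := by exact_mod_cast hk1
    nlinarith [(by positivity : (0:ℝ) ≤ ((F.filter fun s => g s = j).card : ℝ))]
  · -- distance bound
    set I : Finset S := F.filter (fun s => g s = j) with hI
    intro s hs
    -- everything in T ∪ I reaches T
    have hTUI : ∀ a : S, a ∈ ((T ∪ I : Finset S) : Set S) → reaches r (T : Set S) a := by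
      intro a ha
      rcases Finset.mem_union.mp ha with h | h
      · exact ⟨0, a, h, rfl⟩
      · exact ((Finset.mem_filter.mp (Finset.mem_filter.mp h).1).2).2
    have hsT : reaches r (T : Set S) s := by
      obtain ⟨m, a, ha, hp⟩ := hs
      exact reaches_of_pathLen hp (hTUI a ha)
    set d := distTo r (T : Set S) s with hd
    -- main claim: distance to T ∪ I is at most k
    have hmain : distTo r ((T ∪ I : Finset S) : Set S) s ≤ k := by
      rcases le_or_gt d k with hdk | hdk
      · obtain ⟨a, ha, hp⟩ := distTo_spec hsT
        have ha' : a ∈ ((T ∪ I : Finset S) : Set S) :=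
          Finset.mem_union.mpr (Or.inl ha)
        exact le_trans (distTo_le ha' hp) hdk
      · -- choose i ∈ [1, k] with (d - i) % k = j
        set m := (d - j) % k with hm
        set i := if m = 0 then k else m with hi
        have hmk : m < k := Nat.mod_lt _ hk1
        have hi1 : 1 ≤ i := by
          rw [hi]; split
          · exact hk1
          · omega
        have hik : i ≤ k := by
          rw [hi]; split
          · exact le_refl k
          · exact le_of_lt hmk
        have hjd : j ≤ d := le_of_lt (lt_trans hjk hdk)
        have hdm : d - j = k * ((d - j) / k) + m := (Nat.div_add_mod _ _).symm
        have hres : (d - i) % k = j := by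
          rw [hi]; split
          · -- m = 0 : d = j + k * q, use i = k
            rename_i h0
            have hdq : d = j + k * ((d - j) / k) := by omega
            have h1 : (d - k) % k = d % k := (Nat.mod_eq_sub_mod (le_of_lt hdk)).symm
            rw [h1, hdq, Nat.add_mul_mod_self_left]
            exact Nat.mod_eq_of_lt hjk
          · -- m ≠ 0 : i = m
            have hq : d - m = j + k * ((d - j) / k) := by omega
            rw [hq, Nat.add_mul_mod_self_left]
            exact Nat.mod_eq_of_lt hjk
        have hid : i ≤ d := le_trans hik (le_of_lt hdk)
        obtain ⟨v, hpv, hrv, hdv⟩ := exists_mid hsT hid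
        have hdv1 : 1 ≤ distTo r (T : Set S) v := by omega
        have hvT : v ∉ T := by
          intro hvT
          have : distTo r (T : Set S) v ≤ 0 := distTo_le (A := (T : Set S)) hvT rfl
          omega
        have hvI : v ∈ I := by
          rw [hI]
          refine Finset.mem_filter.mpr ⟨Finset.mem_filter.mpr ⟨Finset.mem_univ v, hvT, hrv⟩, ?_⟩
          rw [hg]
          simp only []
          rw [hdv]
          exact hres
        have hv' : v ∈ ((T ∪ I : Finset S) : Set S) := Finset.mem_union.mpr (Or.inr hvI)
        exact le_trans (distTo_le hv' hpv) hik
    calc (distTo r ((T ∪ I : Finset S) : Set S) s : ℝ) ≤ (k : ℝ) := by exact_mod_cast hmain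
      _ ≤ Real.sqrt n := hk_le
end

section
/- Let P be an MDP with absorbing target set T and weight function w : T → [0,∞), with reachability value val_P(s) := max over positional strategies σ of val_{P_σ}(s). Let σ be an optimal positional strategy, i.e., val_{P_σ}(s) = val_P(s) for all s, such that in the induced Markov chain P_σ every state can reach T along edges, and let k ≥ 1 be the number of levels of P_σ. Let v̲_0 be the vector with v̲_0(s) = w(s) for s ∈ T and v̲_0(s) = 0 otherwise. Then for every integer t ≥ 1, every 0 ≤ i ≤ k, and every state s in level ℓ_i of P_σ: val_P(s) − (L_P^{k·t} v̲_0)(s) ≤ (1 − p_min^i)·(1 − p_min^k)^{t−1}·w_max, where w_max := max_{t ∈ T} w(t). -/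
variable {S : Type} [Fintype S] [DecidableEq S]

/-- A finite Markov decision process: states are partitioned into decision states
`Sd` and probabilistic states (the complement of `Sd`); every state `s` has a
nonempty successor set `E s`; every probabilistic state carries a probability
distribution `δ s` supported exactly on `E s`; and `T` is an absorbing target set. -/
structure MDP (S : Type) [Fintype S] [DecidableEq S] where
  Sd : Finset S
  E : S → Finset S
  δ : S → S → ℝ
  E_nonempty : ∀ s : S, (E s).Nonempty
  nonneg : ∀ s s' : S, 0 ≤ δ s s'
  rowsum : ∀ s ∉ Sd, ∑ s' ∈ E s, δ s s' = 1
  support : ∀ s ∉ Sd, ∀ s' : S, (0 < δ s s' ↔ s' ∈ E s)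
  T : Finset S
  T_absorbing : ∀ t ∈ T, E t = {t}

variable {S : Type} [Fintype S] [DecidableEq S]

/-- The MDP reachability Bellman operator `L_P`. -/
noncomputable def MDP.update (P : MDP S) (w : S → ℝ) (v : S → ℝ) : S → ℝ :=
  fun s =>
    if s ∈ P.T then w s
    else if s ∈ P.Sd then (P.E s).sup' (P.E_nonempty s) v
    else ∑ s' ∈ P.E s, P.δ s s' * v s'

/-- The Bellman operator `L_σ` induced by a positional strategy `σ`: at non-target
decision states, the maximum over successors is replaced by evaluation at `σ s`. -/
noncomputable def MDP.stratUpdate (P : MDP S) (σ : S → S) (w : S → ℝ) (v : S → ℝ) :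
    S → ℝ :=
  fun s =>
    if s ∈ P.T then w s
    else if s ∈ P.Sd then v (σ s)
    else ∑ s' ∈ P.E s, P.δ s s' * v s'

/-- The Markov chain `P_σ` induced by a positional strategy `σ` (decision states move
deterministically to `σ s`; probabilistic states keep their distribution). -/
def MDP.toMC (P : MDP S) (σ : S → S) (hσ : ∀ s ∈ P.Sd, σ s ∈ P.E s) : MC S where
  δ := fun a b => if a ∈ P.Sd then (if b = σ a then 1 else 0) else P.δ a b
  T := P.T
  nonneg := by
    intro a b
    by_cases h : a ∈ P.Sd
    · by_cases h' : b = σ a <;> simp [h, h']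
    · simpa [h] using P.nonneg a b
  rowsum := by
    intro a
    by_cases h : a ∈ P.Sd
    · simp [h]
    · have h2 := P.rowsum a h
      have h3 : ∑ s' : S, P.δ a s' = ∑ s' ∈ P.E a, P.δ a s' := by
        symm
        apply Finset.sum_subset (Finset.subset_univ _)
        intro b _ hb
        by_contra hne
        exact hb ((P.support a h b).mp (lt_of_le_of_ne (P.nonneg a b) (Ne.symm hne)))
      simp only [h, if_false]
      rw [h3, h2]
  absorbing := by
    intro t ht
    have hE : P.E t = {t} := P.T_absorbing t ht
    by_cases h : t ∈ P.Sd
    · have hσt : σ t = t := by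
        have h2 := hσ t h
        rw [hE, Finset.mem_singleton] at h2
        exact h2
      simp [h, hσt]
    · have h2 := P.rowsum t h
      rw [hE, Finset.sum_singleton] at h2
      simp [h, h2]

/-- The reachability value of the MDP: the maximum over positional strategies of the
reachability value of the induced Markov chain. -/
noncomputable def MDP.val (P : MDP S) (w : S → ℝ) (s : S) : ℝ :=
  ⨆ σ : {σ : S → S // ∀ a ∈ P.Sd, σ a ∈ P.E a}, (P.toMC σ.1 σ.2).reachVal w s

/-- Smallest positive transition probability of the MDP. -/
noncomputable def MDP.pmin (P : MDP S) : ℝ :=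
  sInf {p : ℝ | 0 < p ∧ ∃ s : S, s ∉ P.Sd ∧ ∃ s' : S, P.δ s s' = p}

namespace MC
variable (M : MC S)

lemma P_apply (a b : S) : M.P a b = M.δ a b := rfl

lemma pow_entry_nonneg (n : ℕ) (a b : S) : 0 ≤ (M.P ^ n) a b := by
  induction n generalizing a b with
  | zero => rw [pow_zero, Matrix.one_apply]; split <;> norm_num
  | succ n ih =>
    rw [pow_succ, Matrix.mul_apply]
    exact Finset.sum_nonneg fun c _ => mul_nonneg (ih a c) (M.nonneg c b)

lemma pow_rowsum_s14 (n : ℕ) (a : S) : ∑ b : S, (M.P ^ n) a b = 1 := by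
  induction n generalizing a with
  | zero => simp [Matrix.one_apply]
  | succ n ih =>
    simp only [pow_succ, Matrix.mul_apply]
    rw [Finset.sum_comm]
    calc ∑ c : S, ∑ b : S, (M.P ^ n) a c * M.P c b
        = ∑ c : S, (M.P ^ n) a c * ∑ b : S, M.δ c b := by
          simp [Finset.mul_sum, P_apply]
      _ = 1 := by simp [M.rowsum, ih]

lemma delta_target {t : S} (ht : t ∈ M.T) (b : S) : M.δ t b = if b = t then 1 else 0 := by
  have h1 := M.absorbing t ht
  have h2 := M.rowsum t
  by_cases hb : b = t
  · simp [hb, h1]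
  · have hsplit : M.δ t t + ∑ b ∈ Finset.univ.erase t, M.δ t b = ∑ b : S, M.δ t b :=
      Finset.add_sum_erase Finset.univ (M.δ t) (Finset.mem_univ t)
    have hz : ∑ b ∈ Finset.univ.erase t, M.δ t b = 0 := by rw [h2] at hsplit; linarith
    have := (Finset.sum_eq_zero_iff_of_nonneg (fun x _ => M.nonneg t x)).mp hz b
      (Finset.mem_erase.mpr ⟨hb, Finset.mem_univ b⟩)
    simp [hb, this]

lemma pow_target {t : S} (ht : t ∈ M.T) (n : ℕ) (b : S) :
    (M.P ^ n) t b = if b = t then 1 else 0 := by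
  induction n with
  | zero => rw [pow_zero, Matrix.one_apply]; simp [eq_comm]
  | succ n ih =>
    rw [pow_succ', Matrix.mul_apply]
    calc ∑ c : S, M.P t c * (M.P ^ n) c b
        = ∑ c : S, (if c = t then 1 else 0) * (M.P ^ n) c b := by
          simp only [P_apply, M.delta_target ht]
      _ = (M.P ^ n) t b := by simp
      _ = if b = t then 1 else 0 := ih

lemma pow_target_mono_s14 {t : S} (ht : t ∈ M.T) (n : ℕ) (a : S) :
    (M.P ^ n) a t ≤ (M.P ^ (n + 1)) a t := by
  rw [pow_succ, Matrix.mul_apply]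
  have h1 : (M.P ^ n) a t * M.P t t ≤ ∑ c : S, (M.P ^ n) a c * M.P c t :=
    Finset.single_le_sum (f := fun c => (M.P ^ n) a c * M.P c t)
      (fun c _ => mul_nonneg (M.pow_entry_nonneg n a c) (M.nonneg c t)) (Finset.mem_univ t)
  have h2 : M.P t t = 1 := M.absorbing t ht
  rw [h2, mul_one] at h1
  exact h1

lemma pow_target_mono' {t : S} (ht : t ∈ M.T) {m n : ℕ} (h : m ≤ n) (a : S) :
    (M.P ^ m) a t ≤ (M.P ^ n) a t := by
  induction n with
  | zero => simp_all
  | succ n ih =>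
    rcases Nat.lt_or_ge m (n+1) with h' | h'
    · exact le_trans (ih (Nat.lt_succ_iff.mp h')) (M.pow_target_mono_s14 ht n a)
    · have : m = n + 1 := le_antisymm h h'
      simp [this]

lemma hitBy_nonneg (s : S) (n : ℕ) : 0 ≤ M.hitBy s n :=
  Finset.sum_nonneg fun t _ => M.pow_entry_nonneg n s t

lemma hitBy_le_one (s : S) (n : ℕ) : M.hitBy s n ≤ 1 := by
  rw [← M.pow_rowsum_s14 n s]
  exact Finset.sum_le_sum_of_subset_of_nonneg (Finset.subset_univ _)
    (fun t _ _ => M.pow_entry_nonneg n s t)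

lemma hitBy_mono (s : S) {m n : ℕ} (h : m ≤ n) : M.hitBy s m ≤ M.hitBy s n :=
  Finset.sum_le_sum fun t ht => M.pow_target_mono' ht h s

lemma hitBy_target {t : S} (ht : t ∈ M.T) (n : ℕ) : M.hitBy t n = 1 := by
  unfold hitBy
  rw [Finset.sum_congr rfl (fun x hx => by rw [M.pow_target ht n x])]
  simp [Finset.sum_ite_eq', ht, eq_comm]

lemma pathLen_pow {p : ℝ} (hp : 0 ≤ p) (hple : ∀ a b, 0 < M.δ a b → p ≤ M.δ a b)
    {n : ℕ} {a b : S} (h : pathLen M.edge n a b) : p ^ n ≤ (M.P ^ n) a b := by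
  induction n generalizing a with
  | zero =>
    have : a = b := h
    simp [this, pow_zero, Matrix.one_apply]
  | succ n ih =>
    obtain ⟨c, hac, hcb⟩ := h
    have h1 : p ≤ M.δ a c := hple a c hac
    have h2 : p ^ n ≤ (M.P ^ n) c b := ih hcb
    calc p ^ (n+1) = p * p ^ n := by ring
      _ ≤ M.δ a c * (M.P ^ n) c b :=
          mul_le_mul h1 h2 (pow_nonneg hp n) (le_trans hp h1)
      _ ≤ (M.P ^ (n+1)) a b := by
          rw [pow_succ', Matrix.mul_apply]
          exact Finset.single_le_sum (f := fun c => M.P a c * (M.P ^ n) c b)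
            (fun c _ => mul_nonneg (M.nonneg a c) (M.pow_entry_nonneg n c b))
            (Finset.mem_univ c)

lemma hitBy_comp {q : ℝ} {k : ℕ} (hq : ∀ s', q ≤ M.hitBy s' k) (s : S) (m : ℕ) :
    1 - M.hitBy s (m + k) ≤ (1 - q) * (1 - M.hitBy s m) := by
  classical
  have hexp : M.hitBy s (m + k) = ∑ s' : S, (M.P ^ m) s s' * M.hitBy s' k := by
    unfold hitBy
    calc ∑ t ∈ M.T, (M.P ^ (m + k)) s t
        = ∑ t ∈ M.T, ∑ s' : S, (M.P ^ m) s s' * (M.P ^ k) s' t := by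
          refine Finset.sum_congr rfl fun t _ => ?_
          rw [pow_add, Matrix.mul_apply]
      _ = ∑ s' : S, ∑ t ∈ M.T, (M.P ^ m) s s' * (M.P ^ k) s' t := Finset.sum_comm
      _ = ∑ s' : S, (M.P ^ m) s s' * ∑ t ∈ M.T, (M.P ^ k) s' t := by
          simp [Finset.mul_sum]
  have hfT : Finset.univ.filter (· ∈ M.T) = M.T := by ext x; simp
  have hsplit : ∑ s' : S, (M.P ^ m) s s' * M.hitBy s' k =
      (∑ s' ∈ Finset.univ.filter (· ∈ M.T), (M.P ^ m) s s' * M.hitBy s' k)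
      + ∑ s' ∈ Finset.univ.filter (· ∉ M.T), (M.P ^ m) s s' * M.hitBy s' k :=
    (Finset.sum_filter_add_sum_filter_not _ _ _).symm
  have h1 : ∑ s' ∈ Finset.univ.filter (· ∈ M.T), (M.P ^ m) s s' * M.hitBy s' k
      = M.hitBy s m := by
    rw [hfT]
    refine Finset.sum_congr rfl fun t ht => ?_
    rw [M.hitBy_target ht, mul_one]
  have hrowsplit : (∑ s' ∈ Finset.univ.filter (· ∈ M.T), (M.P ^ m) s s')
      + ∑ s' ∈ Finset.univ.filter (· ∉ M.T), (M.P ^ m) s s' = 1 := by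
    rw [Finset.sum_filter_add_sum_filter_not]
    exact M.pow_rowsum_s14 m s
  have h2 : ∑ s' ∈ Finset.univ.filter (· ∉ M.T), (M.P ^ m) s s' = 1 - M.hitBy s m := by
    have : ∑ s' ∈ Finset.univ.filter (· ∈ M.T), (M.P ^ m) s s' = M.hitBy s m := by
      rw [hfT]; rfl
    linarith
  have h3 : q * (∑ s' ∈ Finset.univ.filter (· ∉ M.T), (M.P ^ m) s s')
      ≤ ∑ s' ∈ Finset.univ.filter (· ∉ M.T), (M.P ^ m) s s' * M.hitBy s' k := by
    rw [Finset.mul_sum]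
    refine Finset.sum_le_sum fun s' _ => ?_
    rw [mul_comm q _]
    exact mul_le_mul_of_nonneg_left (hq s') (M.pow_entry_nonneg m s s')
  rw [h2] at h3
  nlinarith [hexp, hsplit, h1]

lemma hitBy_from_path {p : ℝ} (hp : 0 ≤ p) (hple : ∀ a b, 0 < M.δ a b → p ≤ M.δ a b)
    {n : ℕ} {a t : S} (ht : t ∈ M.T) (h : pathLen M.edge n a t) : p ^ n ≤ M.hitBy a n := by
  refine le_trans (M.pathLen_pow hp hple h) ?_
  exact Finset.single_le_sum (f := fun t => (M.P ^ n) a t)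
    (fun t _ => M.pow_entry_nonneg n a t) ht

lemma reachVal_le (w : S → ℝ) (hw : ∀ t ∈ M.T, 0 ≤ w t) (W : ℝ)
    (hWb : ∀ t ∈ M.T, w t ≤ W) (hW0 : 0 ≤ W) (s : S) (m : ℕ) :
    M.reachVal w s ≤ (∑ t ∈ M.T, (M.P ^ m) s t * w t) + (1 - M.hitBy s m) * W := by
  have hmono : Monotone fun n => ∑ t ∈ M.T, (M.P ^ n) s t * w t := by
    refine monotone_nat_of_le_succ fun n => ?_
    refine Finset.sum_le_sum fun t ht => ?_
    exact mul_le_mul_of_nonneg_right (M.pow_target_mono_s14 ht n s) (hw t ht)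
  refine ciSup_le fun n => ?_
  have key : ∑ t ∈ M.T, (M.P ^ (m + n)) s t * w t
      ≤ (∑ t ∈ M.T, (M.P ^ m) s t * w t) + (1 - M.hitBy s m) * W := by
    have hdiff : ∑ t ∈ M.T, (M.P ^ (m + n)) s t * w t - ∑ t ∈ M.T, (M.P ^ m) s t * w t
        = ∑ t ∈ M.T, ((M.P ^ (m + n)) s t - (M.P ^ m) s t) * w t := by
      rw [← Finset.sum_sub_distrib]; refine Finset.sum_congr rfl fun t _ => by ring
    have hle : ∑ t ∈ M.T, ((M.P ^ (m + n)) s t - (M.P ^ m) s t) * w t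
        ≤ ∑ t ∈ M.T, ((M.P ^ (m + n)) s t - (M.P ^ m) s t) * W := by
      refine Finset.sum_le_sum fun t ht => ?_
      have hnn : 0 ≤ (M.P ^ (m + n)) s t - (M.P ^ m) s t := by
        have := M.pow_target_mono' ht (Nat.le_add_right m n) s
        linarith
      exact mul_le_mul_of_nonneg_left (hWb t ht) hnn
    have hsum : ∑ t ∈ M.T, ((M.P ^ (m + n)) s t - (M.P ^ m) s t) * W
        = (M.hitBy s (m + n) - M.hitBy s m) * W := by
      rw [← Finset.sum_mul, Finset.sum_sub_distrib]; rfl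
    have h1 : M.hitBy s (m + n) ≤ 1 := M.hitBy_le_one s (m + n)
    have : (M.hitBy s (m + n) - M.hitBy s m) * W ≤ (1 - M.hitBy s m) * W :=
      mul_le_mul_of_nonneg_right (by linarith) hW0
    linarith [hdiff ▸ le_trans hle (hsum ▸ this)]
  exact le_trans (hmono (Nat.le_add_left n m)) key

end MC

namespace MDP

lemma iter_ge (P : MDP S) (w : S → ℝ) (σ : S → S) (hσ : ∀ s ∈ P.Sd, σ s ∈ P.E s) :
    ∀ (m : ℕ) (s : S),
      ∑ t ∈ P.T, ((P.toMC σ hσ).P ^ m) s t * w t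
        ≤ (P.update w)^[m] (fun a => if a ∈ P.T then w a else 0) s := by
  intro m
  induction m with
  | zero =>
    intro s
    simp only [Function.iterate_zero, id]
    rw [pow_zero]
    have : ∑ t ∈ P.T, (1 : Matrix S S ℝ) s t * w t = if s ∈ P.T then w s else 0 := by
      simp [Matrix.one_apply]
    rw [this]
  | succ m ih =>
    intro s
    rw [Function.iterate_succ_apply']
    set M := P.toMC σ hσ with hM
    unfold MDP.update
    by_cases hsT : s ∈ P.T
    · have : ∑ t ∈ P.T, (M.P ^ (m+1)) s t * w t = w s := by
        have hsT' : s ∈ M.T := hsT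
        rw [Finset.sum_congr rfl (fun u _ => by rw [M.pow_target hsT' (m+1) u])]
        simp [hsT]
      rw [this]; simp [hsT]
    · simp only [hsT, if_false]
      have hstep : ∑ t ∈ P.T, (M.P ^ (m+1)) s t * w t
          = ∑ s' : S, M.δ s s' * ∑ t ∈ P.T, (M.P ^ m) s' t * w t := by
        calc ∑ t ∈ P.T, (M.P ^ (m+1)) s t * w t
            = ∑ t ∈ P.T, ∑ s' : S, M.δ s s' * ((M.P ^ m) s' t * w t) := by
              refine Finset.sum_congr rfl fun u _ => ?_
              rw [pow_succ', Matrix.mul_apply, Finset.sum_mul]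
              exact Finset.sum_congr rfl fun s' _ => by rw [MC.P_apply]; ring
          _ = ∑ s' : S, ∑ t ∈ P.T, M.δ s s' * ((M.P ^ m) s' t * w t) := Finset.sum_comm
          _ = _ := by simp [Finset.mul_sum]
      by_cases hsd : s ∈ P.Sd
      · simp only [hsd, if_true]
        have hδ : ∀ s', M.δ s s' = if s' = σ s then 1 else 0 := fun s' => by
          simp [hM, MDP.toMC, hsd]
        rw [hstep]
        have heq : ∑ s' : S, M.δ s s' * ∑ t ∈ P.T, (M.P ^ m) s' t * w t
            = ∑ t ∈ P.T, (M.P ^ m) (σ s) t * w t := by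
          rw [Finset.sum_congr rfl (fun s' _ => by rw [hδ s'])]
          simp
        rw [heq]
        exact le_trans (ih (σ s)) (Finset.le_sup' _ (hσ s hsd))
      · simp only [hsd, if_false]
        rw [hstep]
        have hδ : ∀ s', M.δ s s' = P.δ s s' := fun s' => by simp [hM, MDP.toMC, hsd]
        have hEzero : ∀ s' ∉ P.E s, P.δ s s' = 0 := by
          intro s' hs'
          by_contra hne
          exact hs' ((P.support s hsd s').mp
            (lt_of_le_of_ne (P.nonneg s s') (Ne.symm hne)))
        have hsub : ∑ s' : S, M.δ s s' * ∑ t ∈ P.T, (M.P ^ m) s' t * w t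
            = ∑ s' ∈ P.E s, P.δ s s' * ∑ t ∈ P.T, (M.P ^ m) s' t * w t := by
          rw [Finset.sum_congr rfl (fun s' _ => by rw [hδ s'])]
          symm
          apply Finset.sum_subset (Finset.subset_univ _)
          intro b _ hb
          rw [hEzero b hb, zero_mul]
        rw [hsub]
        exact Finset.sum_le_sum fun s' _ =>
          mul_le_mul_of_nonneg_left (ih s') (P.nonneg s s')

end MDP

/-- Speed of convergence of value iteration for MDPs parametrized
by the levels of an optimal strategy: if `σ` is optimal and the induced Markov chain
`P_σ` (in which every state reaches `T`) has `k ≥ 1` levels, then after `k·t` Bellman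
updates from the initial lower vector, for every state `s` in level `ℓ_i` of `P_σ`,
`val_P(s) - (L_P^{k·t} v̲_0)(s) ≤ (1 - p_min^i)·(1 - p_min^k)^(t-1)·w_max`. -/
theorem stmt_14 {S : Type} [Fintype S] [DecidableEq S] [Nonempty S]
    (P : MDP S) (w : S → ℝ) (hw : ∀ t ∈ P.T, 0 ≤ w t)
    (σ : S → S) (hσ : ∀ s ∈ P.Sd, σ s ∈ P.E s)
    (hopt : ∀ s : S, (P.toMC σ hσ).reachVal w s = P.val w s)
    (hreach : ∀ a : S, reaches (P.toMC σ hσ).edge ((P.T : Finset S) : Set S) a)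
    (k : ℕ) (hk : 1 ≤ k) (hlev : (P.toMC σ hσ).hasLevels k) :
    ∀ t : ℕ, 1 ≤ t → ∀ i : ℕ, i ≤ k → ∀ s ∈ (P.toMC σ hσ).levelSet i,
      P.val w s - (P.update w)^[k * t] (fun a => if a ∈ P.T then w a else 0) s
        ≤ (1 - P.pmin ^ i) * (1 - P.pmin ^ k) ^ (t - 1)
            * sSup (w '' ((P.T : Finset S) : Set S)) := by
  classical
  intro t ht i hik s hs
  set M := P.toMC σ hσ with hM
  set p := P.pmin with hp
  have hp0 : 0 ≤ p := Real.sInf_nonneg (fun x hx => hx.1.le)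
  have hbdd : BddBelow {q : ℝ | 0 < q ∧ ∃ s : S, s ∉ P.Sd ∧ ∃ s', P.δ s s' = q} :=
    ⟨0, fun y hy => hy.1.le⟩
  have hp1 : p ≤ 1 := by
    by_cases hne : {q : ℝ | 0 < q ∧ ∃ s : S, s ∉ P.Sd ∧ ∃ s', P.δ s s' = q}.Nonempty
    · obtain ⟨x, hx0, a, ha, b, hab⟩ := hne
      have hb : b ∈ P.E a := (P.support a ha b).mp (hab ▸ hx0)
      have hle1 : x ≤ 1 := by
        rw [← P.rowsum a ha, ← hab]
        exact Finset.single_le_sum (fun c _ => P.nonneg a c) hb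
      exact le_trans (csInf_le hbdd ⟨hx0, a, ha, b, hab⟩) hle1
    · rw [Set.not_nonempty_iff_eq_empty] at hne
      rw [hp, MDP.pmin, hne, Real.sInf_empty]; norm_num
  have hple : ∀ a b, 0 < M.δ a b → p ≤ M.δ a b := by
    intro a b hab
    by_cases ha : a ∈ P.Sd
    · have hd : M.δ a b = if b = σ a then 1 else 0 := by simp [hM, MDP.toMC, ha]
      rw [hd] at hab ⊢
      split at hab
      · simp_all
      · norm_num at hab
    · have hd : M.δ a b = P.δ a b := by simp [hM, MDP.toMC, ha]
      rw [hd] at hab ⊢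
      exact csInf_le hbdd ⟨hab, a, ha, b, rfl⟩
  have hl0 : M.level0 = ((P.T : Finset S) : Set S) := by
    ext x
    simp only [MC.level0, Set.mem_setOf_eq]
    constructor
    · intro hx
      exact Finset.mem_coe.mpr (hx.resolve_right (not_not_intro (hreach x)))
    · intro hx
      exact Or.inl (Finset.mem_coe.mp hx)
  have hpath : ∃ u ∈ P.T, pathLen M.edge i s u := by
    cases i with
    | zero =>
      have hsT : s ∈ P.T := by
        have h0 : s ∈ M.level0 := hs
        rcases h0 with h | h
        · exact h
        · exact absurd (hreach s) h
      exact ⟨s, hsT, rfl⟩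
    | succ j =>
      have hd : distTo M.edge M.level0 s = j + 1 := hs
      rw [hl0] at hd
      have hne : {n | ∃ a ∈ ((P.T : Finset S) : Set S), pathLen M.edge n s a}.Nonempty := by
        obtain ⟨n, a, ha, hpa⟩ := hreach s
        exact ⟨n, a, ha, hpa⟩
      have hmem := Nat.sInf_mem hne
      rw [show sInf {n | ∃ a ∈ ((P.T : Finset S) : Set S), pathLen M.edge n s a}
            = distTo M.edge ((P.T : Finset S) : Set S) s from rfl, hd] at hmem
      obtain ⟨a, ha, hpa⟩ := hmem
      exact ⟨a, Finset.mem_coe.mp ha, hpa⟩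
  have hqk : ∀ a : S, p ^ k ≤ M.hitBy a k := by
    intro a
    obtain ⟨n, u, hu, hpa⟩ := hreach a
    set d := distTo M.edge ((P.T : Finset S) : Set S) a with hdd
    have hne : {n | ∃ u ∈ ((P.T : Finset S) : Set S), pathLen M.edge n a u}.Nonempty :=
      ⟨n, u, hu, hpa⟩
    have hmem : ∃ u ∈ ((P.T : Finset S) : Set S), pathLen M.edge d a u := Nat.sInf_mem hne
    have hdk : d ≤ k := by
      by_contra hgt
      push_neg at hgt
      by_cases haT : a ∈ P.T
      · have hd0 : d ≤ 0 := Nat.sInf_le ⟨a, Finset.mem_coe.mpr haT, rfl⟩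
        omega
      · have hd1 : 1 ≤ d := by
          rcases Nat.eq_zero_or_pos d with h0 | h1
          · obtain ⟨u', hu', hp'⟩ := hmem
            rw [h0] at hp'
            have : a = u' := hp'
            exact absurd (this ▸ Finset.mem_coe.mp hu') haT
          · exact h1
        obtain ⟨j, hj⟩ : ∃ j, d = j + 1 := ⟨d - 1, by omega⟩
        have hin : a ∈ M.levelSet d := by
          rw [hj]
          show distTo M.edge M.level0 a = j + 1
          rw [hl0, ← hdd, hj]
        rw [hlev.2 d hgt] at hin
        exact hin
    obtain ⟨u', hu', hp'⟩ := hmem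
    have h1 : p ^ d ≤ M.hitBy a d :=
      M.hitBy_from_path hp0 hple (Finset.mem_coe.mp hu') hp'
    calc p ^ k ≤ p ^ d := pow_le_pow_of_le_one hp0 hp1 hdk
      _ ≤ M.hitBy a d := h1
      _ ≤ M.hitBy a k := M.hitBy_mono a hdk
  obtain ⟨u, huT, hup⟩ := hpath
  have hhi : p ^ i ≤ M.hitBy s i := M.hitBy_from_path hp0 hple huT hup
  have key : ∀ j : ℕ, 1 - M.hitBy s (i + k * j) ≤ (1 - p ^ i) * (1 - p ^ k) ^ j := by
    intro j
    induction j with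
    | zero => simp only [Nat.mul_zero, Nat.add_zero, pow_zero, mul_one]; linarith
    | succ j ihj =>
      have hcomp := M.hitBy_comp (q := p ^ k) (k := k) hqk s (i + k * j)
      have hpk1 : p ^ k ≤ 1 := pow_le_one₀ hp0 hp1
      have hmul : (1 - p ^ k) * (1 - M.hitBy s (i + k * j))
          ≤ (1 - p ^ k) * ((1 - p ^ i) * (1 - p ^ k) ^ j) :=
        mul_le_mul_of_nonneg_left ihj (by linarith)
      have heq : i + k * (j + 1) = (i + k * j) + k := by ring
      rw [heq]
      calc 1 - M.hitBy s (i + k * j + k)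
          ≤ (1 - p ^ k) * (1 - M.hitBy s (i + k * j)) := hcomp
        _ ≤ (1 - p ^ k) * ((1 - p ^ i) * (1 - p ^ k) ^ j) := hmul
        _ = (1 - p ^ i) * (1 - p ^ k) ^ (j + 1) := by ring
  have hle_kt : i + k * (t - 1) ≤ k * t := by
    have h1 : k * t = k + k * (t - 1) := by
      conv_lhs => rw [show t = (t - 1) + 1 by omega]
      ring
    rw [h1]
    exact Nat.add_le_add hik le_rfl
  have hfin : 1 - M.hitBy s (k * t) ≤ (1 - p ^ i) * (1 - p ^ k) ^ (t - 1) := by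
    have h1 := key (t - 1)
    have h2 := M.hitBy_mono s hle_kt
    linarith
  obtain ⟨n0, t0, ht0, -⟩ := hreach (Classical.arbitrary S)
  have ht0' : t0 ∈ P.T := Finset.mem_coe.mp ht0
  have hbddW : BddAbove (w '' ((P.T : Finset S) : Set S)) := (Set.toFinite _).bddAbove
  set W := sSup (w '' ((P.T : Finset S) : Set S)) with hW
  have hWb : ∀ u ∈ P.T, w u ≤ W := fun u hu => le_csSup hbddW ⟨u, Finset.mem_coe.mpr hu, rfl⟩
  have hW0 : 0 ≤ W := le_trans (hw t0 ht0') (hWb t0 ht0')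
  have hval := M.reachVal_le w hw W hWb hW0 s (k * t)
  have hiter := P.iter_ge w σ hσ (k * t) s
  rw [← hopt s]
  have hfinW := mul_le_mul_of_nonneg_right hfin hW0
  have hTM : ∑ u ∈ M.T, (M.P ^ (k * t)) s u * w u
      = ∑ u ∈ P.T, (M.P ^ (k * t)) s u * w u := rfl
  rw [hTM] at hval
  linarith
end

section
/- Let M be a Markov chain with targets T and weight function w : T → [0,∞), and suppose that the reachability Bellman update L of M has a unique fixpoint in ℝ^S. Then for every state s ∉ T and every real γ, the reachability Bellman update of the reduced MC M[s = γ] also has a unique fixpoint in ℝ^S. -/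
variable {S : Type} [Fintype S] [DecidableEq S]

/-- Bellman matrix: rows of target states are zeroed. -/
noncomputable def Amat (M : MC S) : Matrix S S ℝ :=
  Matrix.of fun a b => if a ∈ M.T then 0 else M.δ a b

lemma mulVec_one_sub (M : MC S) (v : S → ℝ) (a : S) :
    ((1 - Amat M).mulVec v) a = v a - ∑ b : S, Amat M a b * v b := by
  simp [Matrix.mulVec, dotProduct, Matrix.sub_apply, sub_mul,
    Finset.sum_sub_distrib, Matrix.one_apply, ite_mul, Finset.sum_ite_eq]

lemma fix_iff (M : MC S) (w v : S → ℝ) :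
    M.reachUpdate w v = v ↔
      (1 - Amat M).mulVec v = fun a => if a ∈ M.T then w a else 0 := by
  constructor <;> intro h
  · funext a
    have ha := congrFun h a
    rw [mulVec_one_sub]
    by_cases hT : a ∈ M.T
    · simp only [MC.reachUpdate, if_pos hT] at ha
      simp [Amat, hT, ← ha]
    · simp only [MC.reachUpdate, if_neg hT] at ha
      simp [Amat, hT, ha]
  · funext a
    have ha := congrFun h a
    rw [mulVec_one_sub] at ha
    by_cases hT : a ∈ M.T
    · simp only [if_pos hT] at ha
      simp only [Amat, Matrix.of_apply, if_pos hT, zero_mul, Finset.sum_const_zero,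
        sub_zero] at ha
      simp [MC.reachUpdate, hT, ha]
    · simp only [if_neg hT] at ha
      simp only [Amat, Matrix.of_apply, if_neg hT] at ha
      have : ∑ b : S, M.δ a b * v b = v a := by linarith
      simp [MC.reachUpdate, hT, this]

lemma euniq_of_det (M : MC S) (w : S → ℝ) (hdet : (1 - Amat M).det ≠ 0) :
    ∃! v : S → ℝ, M.reachUpdate w v = v := by
  have hU : IsUnit (1 - Amat M).det := isUnit_iff_ne_zero.mpr hdet
  refine ⟨(1 - Amat M)⁻¹.mulVec fun a => if a ∈ M.T then w a else 0, ?_, ?_⟩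
  · show M.reachUpdate w _ = _
    rw [fix_iff, Matrix.mulVec_mulVec, Matrix.mul_nonsing_inv _ hU, Matrix.one_mulVec]
  · intro v hv
    rw [fix_iff] at hv
    have := congrArg (fun x => (1 - Amat M)⁻¹.mulVec x) hv
    simpa [Matrix.mulVec_mulVec, Matrix.nonsing_inv_mul _ hU, Matrix.one_mulVec]
      using this

lemma det_of_euniq (M : MC S) (w : S → ℝ)
    (huniq : ∃! v : S → ℝ, M.reachUpdate w v = v) : (1 - Amat M).det ≠ 0 := by
  intro hdet
  obtain ⟨u, hu0, hu⟩ := (Matrix.exists_mulVec_eq_zero_iff).mpr hdet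
  obtain ⟨v, hv, hv'⟩ := huniq
  have h2 : M.reachUpdate w (v + u) = v + u := by
    rw [fix_iff] at hv ⊢
    rw [Matrix.mulVec_add, hu, hv]
    simp
  have h3 := hv' _ h2
  exact hu0 (add_eq_left.mp h3)

/-- Maximum principle: a function vanishing on `T` and at `s`, harmonic elsewhere,
has no positive values when `1 - Amat M` is nonsingular. -/
lemma nonpos_max (M : MC S) (s : S) (hdet : (1 - Amat M).det ≠ 0) (u : S → ℝ)
    (h0 : ∀ a ∈ M.T, u a = 0) (h0s : u s = 0)
    (hh : ∀ a, a ∉ M.T → a ≠ s → u a = ∑ b : S, M.δ a b * u b) :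
    ∀ a, u a ≤ 0 := by
  by_contra hpos
  push_neg at hpos
  obtain ⟨a₀, ha₀⟩ := hpos
  obtain ⟨a₁, -, hmax⟩ := Finset.exists_max_image Finset.univ u ⟨a₀, Finset.mem_univ a₀⟩
  set m := u a₁ with hm
  have hm0 : 0 < m := lt_of_lt_of_le ha₀ (hmax a₀ (Finset.mem_univ _))
  set B : Finset S := Finset.univ.filter (fun a => u a = m) with hB
  have hmemB : ∀ a, a ∈ B ↔ u a = m := by simp [hB]
  have ha₁B : a₁ ∈ B := (hmemB a₁).mpr rfl
  have hBT : ∀ a ∈ B, a ∉ M.T := by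
    intro a ha hT
    have h := h0 a hT
    rw [(hmemB a).mp ha] at h; linarith
  have hBs : ∀ a ∈ B, a ≠ s := by
    intro a ha he
    have h := (hmemB a).mp ha
    rw [he, h0s] at h; linarith
  have hclosed : ∀ a ∈ B, ∀ b, M.δ a b ≠ 0 → b ∈ B := by
    intro a ha b hb
    have hharm := hh a (hBT a ha) (hBs a ha)
    have hsum : ∑ b : S, M.δ a b * (m - u b) = 0 := by
      simp only [mul_sub]
      rw [Finset.sum_sub_distrib, ← Finset.sum_mul, M.rowsum, one_mul, ← hharm,
        (hmemB a).mp ha, sub_self]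
    have hterm := (Finset.sum_eq_zero_iff_of_nonneg ?_).mp hsum b (Finset.mem_univ b)
    · rcases mul_eq_zero.mp hterm with h | h
      · exact absurd h hb
      · exact (hmemB b).mpr (by linarith)
    · intro x _
      exact mul_nonneg (M.nonneg a x) (by have := hmax x (Finset.mem_univ x); linarith)
  have hBrow : ∀ a ∈ B, ∑ b ∈ B, M.δ a b = 1 := by
    intro a ha
    rw [← M.rowsum a]
    exact Finset.sum_subset (Finset.subset_univ B)
      (fun b _ hb => by by_contra hne; exact hb (hclosed a ha b hne))
  haveI : Nonempty ↥B := ⟨⟨a₁, ha₁B⟩⟩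
  set Q : Matrix ↥B ↥B ℝ := Matrix.of fun a b => M.δ a.1 b.1 with hQ
  have hQ1 : (Q - 1).mulVec (fun _ => (1 : ℝ)) = 0 := by
    funext a
    simp only [Matrix.mulVec, dotProduct, Matrix.sub_apply, Matrix.one_apply,
      hQ, Matrix.of_apply, sub_mul, Finset.sum_sub_distrib, ite_mul, one_mul, zero_mul,
      mul_one, Finset.sum_ite_eq, Finset.mem_univ, if_true, Pi.zero_apply,
      Finset.univ_eq_attach]
    rw [Finset.sum_attach B (fun b => M.δ a.1 b), hBrow a.1 a.2]
    simp [Finset.mem_attach]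
  have hdetQ : (Q - 1).det = 0 :=
    (Matrix.exists_mulVec_eq_zero_iff).mp
      ⟨fun _ => (1 : ℝ), fun h => one_ne_zero (congrFun h ⟨a₁, ha₁B⟩), hQ1⟩
  have hdetQT : ((Q - 1).transpose).det = 0 := by rw [Matrix.det_transpose]; exact hdetQ
  obtain ⟨pp, hpp0, hpp⟩ := (Matrix.exists_mulVec_eq_zero_iff).mpr hdetQT
  have heig : ∀ b : ↥B, ∑ a : ↥B, M.δ a.1 b.1 * pp a = pp b := by
    intro b
    have h := congrFun hpp b
    simp only [Matrix.mulVec, dotProduct, Matrix.transpose_apply,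
      Matrix.sub_apply, Matrix.one_apply, hQ, Matrix.of_apply, sub_mul,
      Finset.sum_sub_distrib, ite_mul, one_mul, zero_mul, Finset.sum_ite_eq,
      Finset.sum_ite_eq', Finset.mem_univ, if_true, Pi.zero_apply] at h
    linarith
  set φ : S → ℝ := fun x => if h : x ∈ B then pp ⟨x, h⟩ else 0 with hφ
  have hφin : ∀ a : ↥B, φ a.1 = pp a := by
    intro a; simp [hφ, a.2]
  have hφ0 : φ ≠ 0 := by
    intro h
    apply hpp0
    funext a
    have := congrFun h a.1
    rw [hφin a] at this
    exact this
  have key : ∀ b : S, ∑ a : S, Amat M a b * φ a = φ b := by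
    intro b
    have h1 : ∑ a : S, Amat M a b * φ a = ∑ a ∈ B, Amat M a b * φ a := by
      symm
      apply Finset.sum_subset (Finset.subset_univ B)
      intro x _ hx
      simp [hφ, hx]
    have h2 : ∑ a ∈ B, Amat M a b * φ a = ∑ a : ↥B, M.δ a.1 b * pp a := by
      rw [← Finset.sum_coe_sort B (fun a => Amat M a b * φ a)]
      apply Finset.sum_congr rfl
      intro a _
      rw [hφin a]
      simp [Amat, hBT a.1 a.2]
    rw [h1, h2]
    by_cases hbB : b ∈ B
    · have := heig ⟨b, hbB⟩
      simp only [this]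
      simp [hφ, hbB]
    · rw [Finset.sum_eq_zero, hφ]
      · simp [hbB]
      · intro a _
        have : M.δ a.1 b = 0 := by
          by_contra hne
          exact hbB (hclosed a.1 a.2 b hne)
        simp [this]
  have hker : ((1 - Amat M).transpose).mulVec φ = 0 := by
    funext b
    simp only [Matrix.mulVec, dotProduct, Matrix.transpose_apply,
      Matrix.sub_apply, Matrix.one_apply, sub_mul, Finset.sum_sub_distrib, ite_mul,
      one_mul, zero_mul, Finset.sum_ite_eq, Finset.sum_ite_eq', Finset.mem_univ,
      if_true, Pi.zero_apply]
    rw [key b, sub_self]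
  have : ((1 - Amat M).transpose).det = 0 :=
    (Matrix.exists_mulVec_eq_zero_iff).mp ⟨φ, hφ0, hker⟩
  rw [Matrix.det_transpose] at this
  exact hdet this

lemma det_reduce (M : MC S) (s : S) (hs : s ∉ M.T)
    (hdet : (1 - Amat M).det ≠ 0) : (1 - Amat (M.reduce s)).det ≠ 0 := by
  intro hdet'
  obtain ⟨u, hu0, hu⟩ := (Matrix.exists_mulVec_eq_zero_iff).mpr hdet'
  have hu' : ∀ a, u a = ∑ b : S, Amat (M.reduce s) a b * u b := by
    intro a
    have h := congrFun hu a
    rw [mulVec_one_sub] at h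
    have h0 : (0 : S → ℝ) a = 0 := rfl
    rw [h0] at h
    linarith
  have hT' : ∀ a, a = s ∨ a ∈ M.T → u a = 0 := by
    intro a ha
    rw [hu' a]
    apply Finset.sum_eq_zero
    intro b _
    have hmem : a ∈ (M.reduce s).T := by
      simp only [MC.reduce, Finset.mem_insert]; tauto
    simp [Amat, hmem]
  have hh : ∀ a, a ∉ M.T → a ≠ s → u a = ∑ b : S, M.δ a b * u b := by
    intro a haT has
    rw [hu' a]
    apply Finset.sum_congr rfl
    intro b _
    have hmem : a ∉ (M.reduce s).T := by
      simp only [MC.reduce, Finset.mem_insert]; tauto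
    have heq : Amat (M.reduce s) a b = M.δ a b := by
      have h2 : a ∉ insert s M.T := hmem
      simp only [Amat, Matrix.of_apply, MC.reduce, if_neg h2, if_neg has]
    rw [heq]
  have h1 := nonpos_max M s hdet u (fun a h => hT' a (Or.inr h)) (hT' s (Or.inl rfl)) hh
  have h2 := nonpos_max M s hdet (-u) (fun a h => by simp [hT' a (Or.inr h)])
    (by simp [hT' s (Or.inl rfl)])
    (fun a hT has => by
      simp only [Pi.neg_apply, mul_neg]
      rw [Finset.sum_neg_distrib, ← hh a hT has])
  apply hu0
  funext a
  have := h2 a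
  simp only [Pi.neg_apply, neg_nonpos] at this
  exact le_antisymm (h1 a) this

/-- If the reachability Bellman update of `M` has a unique fixpoint,
then for every non-target state `s` and every real `γ` the reachability Bellman
update of the reduced Markov chain `M[s = γ]` also has a unique fixpoint. -/
theorem stmt_15 {S : Type} [Fintype S] [DecidableEq S] [Nonempty S]
    (M : MC S) (w : S → ℝ) (hw : ∀ t ∈ M.T, 0 ≤ w t)
    (huniq : ∃! v : S → ℝ, M.reachUpdate w v = v)
    (s : S) (hs : s ∉ M.T) (γ : ℝ) :
    ∃! v : S → ℝ, (M.reduce s).reachUpdate (Function.update w s γ) v = v :=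
  euniq_of_det _ _ (det_reduce M s hs (det_of_euniq M w huniq))
end

section
/- Let M be a Markov chain with absorbing targets T and weight function w : S → (0,∞) such that every state can reach T along edges. Then the SSP Bellman update has a unique fixpoint in ℝ^S, and this fixpoint equals the stochastic shortest path value vector of M. -/
variable {S : Type} [Fintype S] [DecidableEq S]

namespace SSP16

lemma Ppow_nonneg (M : MC S) (n : ℕ) (s s' : S) : 0 ≤ (M.P ^ n) s s' := by
  induction n generalizing s s' with
  | zero => rw [pow_zero, Matrix.one_apply]; split <;> norm_num
  | succ n ih =>
    rw [pow_succ, Matrix.mul_apply]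
    exact Finset.sum_nonneg fun k _ => mul_nonneg (ih s k) (M.nonneg k s')

lemma Ppow_rowsum (M : MC S) (n : ℕ) (s : S) : ∑ s' : S, (M.P ^ n) s s' = 1 := by
  induction n generalizing s with
  | zero => simp [Matrix.one_apply]
  | succ n ih =>
    simp only [pow_succ, Matrix.mul_apply]
    rw [Finset.sum_comm]
    have h : ∀ k : S, ∑ s' : S, (M.P ^ n) s k * M.P k s' = (M.P ^ n) s k := by
      intro k
      rw [← Finset.mul_sum, show (∑ s' : S, M.P k s') = 1 from M.rowsum k, mul_one]
    rw [Finset.sum_congr rfl fun k _ => h k]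
    exact ih s

lemma delta_T (M : MC S) {t : S} (ht : t ∈ M.T) (s' : S) :
    M.δ t s' = if s' = t then 1 else 0 := by
  by_cases h : s' = t
  · rw [if_pos h, h]; exact M.absorbing t ht
  · rw [if_neg h]
    have h1 : M.δ t t + ∑ x ∈ Finset.univ.erase t, M.δ t x = 1 := by
      rw [Finset.add_sum_erase _ _ (Finset.mem_univ t)]; exact M.rowsum t
    rw [M.absorbing t ht] at h1
    have h0 : ∑ x ∈ Finset.univ.erase t, M.δ t x = 0 := by linarith
    exact (Finset.sum_eq_zero_iff_of_nonneg (fun x _ => M.nonneg t x)).mp h0 s'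
      (Finset.mem_erase.mpr ⟨h, Finset.mem_univ s'⟩)

lemma Ppow_T (M : MC S) {t : S} (ht : t ∈ M.T) (n : ℕ) (s' : S) :
    (M.P ^ n) t s' = if s' = t then 1 else 0 := by
  induction n generalizing s' with
  | zero => rw [pow_zero, Matrix.one_apply]; simp [eq_comm]
  | succ n ih =>
    rw [pow_succ', Matrix.mul_apply]
    rw [Finset.sum_eq_single t]
    · show M.δ t t * _ = _
      rw [M.absorbing t ht, one_mul, ih]
    · intro k _ hk
      show M.δ t k * _ = 0
      rw [delta_T M ht k, if_neg hk, zero_mul]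
    · intro h; exact absurd (Finset.mem_univ t) h

lemma path_pos (M : MC S) : ∀ (n : ℕ) (s t : S), pathLen M.edge n s t → 0 < (M.P ^ n) s t := by
  intro n
  induction n with
  | zero =>
    intro s t h
    simp only [pathLen] at h
    subst h
    simp [Matrix.one_apply]
  | succ n ih =>
    rintro s t ⟨b, hb, hp⟩
    rw [pow_succ', Matrix.mul_apply]
    refine Finset.sum_pos' (fun k _ => mul_nonneg (M.nonneg s k) (Ppow_nonneg M n k t)) ?_
    exact ⟨b, Finset.mem_univ b, mul_pos hb (ih b t hp)⟩


noncomputable def Q (M : MC S) (n : ℕ) (s : S) : ℝ :=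
  ∑ s' ∈ Finset.univ.filter (fun x => x ∉ M.T), (M.P ^ n) s s'

lemma Q_nonneg (M : MC S) (n : ℕ) (s : S) : 0 ≤ Q M n s :=
  Finset.sum_nonneg fun k _ => Ppow_nonneg M n s k

lemma Q_le_one (M : MC S) (n : ℕ) (s : S) : Q M n s ≤ 1 := by
  rw [← Ppow_rowsum M n s]
  exact Finset.sum_le_sum_of_subset_of_nonneg (Finset.filter_subset _ _)
    (fun k _ _ => Ppow_nonneg M n s k)

lemma Q_T (M : MC S) {t : S} (ht : t ∈ M.T) (n : ℕ) : Q M n t = 0 := by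
  refine Finset.sum_eq_zero fun s' hs' => ?_
  rw [Ppow_T M ht, if_neg]
  rintro rfl
  exact (Finset.mem_filter.mp hs').2 ht

lemma Q_zero (M : MC S) {s : S} (hs : s ∉ M.T) : Q M 0 s = 1 := by
  unfold Q
  simp only [pow_zero, Matrix.one_apply]
  rw [Finset.sum_ite_eq]
  simp [hs]

lemma Q_add (M : MC S) (a b : ℕ) (s : S) :
    Q M (a + b) s = ∑ k : S, (M.P ^ a) s k * Q M b k := by
  unfold Q
  simp only [pow_add, Matrix.mul_apply]
  rw [Finset.sum_comm]
  exact Finset.sum_congr rfl fun k _ => (Finset.mul_sum _ _ _).symm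

lemma Q_succ (M : MC S) (n : ℕ) (s : S) :
    Q M (n + 1) s = ∑ k : S, M.δ s k * Q M n k := by
  rw [show n + 1 = 1 + n from Nat.add_comm n 1, Q_add]
  exact Finset.sum_congr rfl fun k _ => by rw [pow_one]; rfl

lemma Q_succ_le (M : MC S) (n : ℕ) (s : S) : Q M (n + 1) s ≤ Q M n s := by
  rw [Q_add M n 1 s]
  calc ∑ k : S, (M.P ^ n) s k * Q M 1 k
      ≤ ∑ k : S, (M.P ^ n) s k * (if k ∈ M.T then 0 else 1) := by
        refine Finset.sum_le_sum fun k _ => mul_le_mul_of_nonneg_left ?_ (Ppow_nonneg M n s k)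
        by_cases hk : k ∈ M.T
        · rw [if_pos hk, Q_T M hk]
        · rw [if_neg hk]; exact Q_le_one M 1 k
    _ = Q M n s := by
        unfold Q
        rw [Finset.sum_filter]
        refine Finset.sum_congr rfl fun k _ => ?_
        by_cases hk : k ∈ M.T <;> simp [hk]

lemma Q_anti (M : MC S) (s : S) : Antitone fun n => Q M n s :=
  antitone_nat_of_succ_le fun n => Q_succ_le M n s

lemma Q_add_le (M : MC S) {b : ℕ} {c : ℝ} (hc : ∀ k, Q M b k ≤ c) (a : ℕ) (s : S) :
    Q M (a + b) s ≤ c * Q M a s := by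
  rw [Q_add]
  calc ∑ k : S, (M.P ^ a) s k * Q M b k
      = ∑ k ∈ Finset.univ.filter (fun x => x ∉ M.T), (M.P ^ a) s k * Q M b k := by
        symm
        apply Finset.sum_subset (Finset.filter_subset _ _)
        intro k _ hk
        have hkT : k ∈ M.T := by simpa using hk
        rw [Q_T M hkT, mul_zero]
    _ ≤ ∑ k ∈ Finset.univ.filter (fun x => x ∉ M.T), (M.P ^ a) s k * c :=
        Finset.sum_le_sum fun k _ => mul_le_mul_of_nonneg_left (hc k) (Ppow_nonneg M a s k)
    _ = c * Q M a s := by rw [← Finset.sum_mul, mul_comm]; rfl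

lemma Q_geo (M : MC S) {N : ℕ} {c : ℝ} (hc0 : 0 ≤ c) (hc : ∀ k, Q M N k ≤ c)
    (j : ℕ) (s : S) : Q M (j * N) s ≤ c ^ j := by
  induction j generalizing s with
  | zero => simpa using Q_le_one M 0 s
  | succ j ih =>
    rw [show (j + 1) * N = j * N + N from by ring]
    calc Q M (j * N + N) s ≤ c * Q M (j * N) s := Q_add_le M hc _ s
      _ ≤ c * c ^ j := mul_le_mul_of_nonneg_left (ih s) hc0
      _ = c ^ (j + 1) := by ring


lemma exists_N (M : MC S) [Nonempty S] (hreach : ∀ a : S, reaches M.edge (M.T : Set S) a) :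
    ∃ (N : ℕ) (c : ℝ), 0 ≤ c ∧ c < 1 ∧ 0 < N ∧ ∀ s, Q M N s ≤ c := by
  have h1 : ∀ s : S, ∃ n, Q M n s < 1 := by
    intro s
    obtain ⟨n, t, ht, hp⟩ := hreach s
    have htT : t ∈ M.T := ht
    refine ⟨n, ?_⟩
    have hpos : 0 < (M.P ^ n) s t := path_pos M n s t hp
    have hsplit : (∑ x ∈ Finset.univ.filter (fun x => x ∈ M.T), (M.P ^ n) s x)
        + Q M n s = 1 := by
      rw [← Ppow_rowsum M n s]
      exact Finset.sum_filter_add_sum_filter_not _ _ _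
    have hT : (M.P ^ n) s t ≤ ∑ x ∈ Finset.univ.filter (fun x => x ∈ M.T), (M.P ^ n) s x :=
      Finset.single_le_sum (fun x _ => Ppow_nonneg M n s x)
        (Finset.mem_filter.mpr ⟨Finset.mem_univ t, htT⟩)
    linarith
  choose nf hnf using h1
  set N' : ℕ := Finset.univ.sup nf with hN'
  refine ⟨N' + 1, Finset.univ.sup' Finset.univ_nonempty (fun s => Q M (N' + 1) s), ?_, ?_, Nat.succ_pos _, ?_⟩
  · obtain ⟨a⟩ := ‹Nonempty S›
    exact le_trans (Q_nonneg M (N' + 1) a) (Finset.le_sup' _ (Finset.mem_univ a))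
  · rw [Finset.sup'_lt_iff]
    intro s _
    calc Q M (N' + 1) s ≤ Q M (nf s) s :=
          Q_anti M s (le_trans (Finset.le_sup (Finset.mem_univ s)) (Nat.le_succ N'))
      _ < 1 := hnf s
  · intro s
    exact Finset.le_sup' _ (Finset.mem_univ s)

lemma Q_partial_sum (M : MC S) {N : ℕ} {c : ℝ} (hN : 0 < N) (hc0 : 0 ≤ c) (hc1 : c < 1)
    (hc : ∀ k, Q M N k ≤ c) (s : S) (m : ℕ) :
    ∑ n ∈ Finset.range m, Q M n s ≤ N * (1 - c)⁻¹ := by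
  have hblock : ∀ K, ∑ n ∈ Finset.range (K * N), Q M n s ≤ N * ∑ k ∈ Finset.range K, c ^ k := by
    intro K
    induction K with
    | zero => simp
    | succ K ih =>
      rw [show (K + 1) * N = K * N + N from by ring, Finset.sum_range_add,
        Finset.sum_range_succ]
      have h2 : ∑ j ∈ Finset.range N, Q M (K * N + j) s ≤ N * c ^ K := by
        calc ∑ j ∈ Finset.range N, Q M (K * N + j) s
            ≤ ∑ _j ∈ Finset.range N, c ^ K := Finset.sum_le_sum fun j _ =>
              le_trans (Q_anti M s (Nat.le_add_right _ j)) (Q_geo M hc0 hc K s)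
          _ = N * c ^ K := by rw [Finset.sum_const, Finset.card_range, nsmul_eq_mul]
      calc ∑ n ∈ Finset.range (K * N), Q M n s + ∑ j ∈ Finset.range N, Q M (K * N + j) s
          ≤ N * ∑ k ∈ Finset.range K, c ^ k + N * c ^ K := add_le_add ih h2
        _ = N * (∑ k ∈ Finset.range K, c ^ k + c ^ K) := by ring
  calc ∑ n ∈ Finset.range m, Q M n s
      ≤ ∑ n ∈ Finset.range (m * N), Q M n s :=
        Finset.sum_le_sum_of_subset_of_nonneg
          (Finset.range_subset_range.mpr (Nat.le_mul_of_pos_right m hN))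
          (fun k _ _ => Q_nonneg M k s)
    _ ≤ N * ∑ k ∈ Finset.range m, c ^ k := hblock m
    _ ≤ N * (1 - c)⁻¹ := by
        have hs : Summable fun k : ℕ => c ^ k := summable_geometric_of_lt_one hc0 hc1
        have hsum : ∑ k ∈ Finset.range m, c ^ k ≤ (1 - c)⁻¹ := by
          calc ∑ k ∈ Finset.range m, c ^ k ≤ ∑' k : ℕ, c ^ k :=
                Summable.sum_le_tsum _ (fun k _ => pow_nonneg hc0 k) hs
            _ = (1 - c)⁻¹ := tsum_geometric_of_lt_one hc0 hc1
        exact mul_le_mul_of_nonneg_left hsum (Nat.cast_nonneg N)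

lemma Q_summable (M : MC S) [Nonempty S] (hreach : ∀ a : S, reaches M.edge (M.T : Set S) a)
    (s : S) : Summable fun n => Q M n s := by
  obtain ⟨N, c, hc0, hc1, hN, hc⟩ := exists_N M hreach
  exact summable_of_sum_range_le (fun n => Q_nonneg M n s)
    (Q_partial_sum M hN hc0 hc1 hc s)

lemma Q_tendsto_zero (M : MC S) [Nonempty S]
    (hreach : ∀ a : S, reaches M.edge (M.T : Set S) a) (s : S) :
    Filter.Tendsto (fun n => Q M n s) Filter.atTop (nhds 0) :=
  (Q_summable M hreach s).tendsto_atTop_zero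


section Vals

variable (M : MC S) (w : S → ℝ)

noncomputable def fNT (n : ℕ) (s : S) : ℝ :=
  ∑ s' ∈ Finset.univ.filter (fun x => x ∉ M.T), (M.P ^ n) s s' * w s'

noncomputable def gT (n : ℕ) (s : S) : ℝ :=
  ∑ t ∈ M.T, (M.P ^ n) s t * w t

lemma reachVal_eq (s : S) : M.reachVal w s = ⨆ n : ℕ, gT M w n s := rfl

lemma sspVal_eq (s : S) : M.sspVal w s = (∑' n : ℕ, fNT M w n s) + M.reachVal w s := rfl

lemma fNT_nonneg (hw : ∀ a : S, 0 < w a) (n : ℕ) (s : S) : 0 ≤ fNT M w n s :=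
  Finset.sum_nonneg fun k _ => mul_nonneg (Ppow_nonneg M n s k) (hw k).le

lemma w_bdd (hw : ∀ a : S, 0 < w a) : ∃ W : ℝ, 0 ≤ W ∧ ∀ a : S, w a ≤ W := by
  cases isEmpty_or_nonempty S with
  | inl h => exact ⟨0, le_refl 0, fun a => (h.false a).elim⟩
  | inr h =>
    refine ⟨Finset.univ.sup' Finset.univ_nonempty w, ?_, fun a => Finset.le_sup' w (Finset.mem_univ a)⟩
    obtain ⟨a⟩ := h
    exact le_trans (hw a).le (Finset.le_sup' w (Finset.mem_univ a))

lemma fNT_le {W : ℝ} (hW : ∀ a : S, w a ≤ W) (n : ℕ) (s : S) :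
    fNT M w n s ≤ W * Q M n s := by
  unfold fNT Q
  rw [Finset.mul_sum]
  refine Finset.sum_le_sum fun k _ => ?_
  rw [mul_comm W]
  exact mul_le_mul_of_nonneg_left (hW k) (Ppow_nonneg M n s k)

lemma fNT_summable [Nonempty S] (hw : ∀ a : S, 0 < w a) (hreach : ∀ a : S, reaches M.edge (M.T : Set S) a) (s : S) :
    Summable fun n => fNT M w n s := by
  obtain ⟨W, hW0, hW⟩ := w_bdd w hw
  exact Summable.of_nonneg_of_le (fun n => fNT_nonneg M w hw n s)
    (fun n => fNT_le M w hW n s) ((Q_summable M hreach s).mul_left W)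

lemma fNT_succ (n : ℕ) (s : S) :
    fNT M w (n + 1) s = ∑ k : S, M.δ s k * fNT M w n k := by
  unfold fNT
  simp only [pow_succ', Matrix.mul_apply, Finset.sum_mul]
  rw [Finset.sum_comm]
  refine Finset.sum_congr rfl fun k _ => ?_
  rw [Finset.mul_sum]
  exact Finset.sum_congr rfl fun s' _ => mul_assoc _ _ _

lemma gT_succ (n : ℕ) (s : S) :
    gT M w (n + 1) s = ∑ k : S, M.δ s k * gT M w n k := by
  unfold gT
  simp only [pow_succ', Matrix.mul_apply, Finset.sum_mul]
  rw [Finset.sum_comm]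
  refine Finset.sum_congr rfl fun k _ => ?_
  rw [Finset.mul_sum]
  exact Finset.sum_congr rfl fun s' _ => mul_assoc _ _ _

lemma gT_mono (hw : ∀ a : S, 0 < w a) (s : S) : Monotone fun n => gT M w n s := by
  refine monotone_nat_of_le_succ fun n => ?_
  unfold gT
  simp only [pow_succ, Matrix.mul_apply]
  refine Finset.sum_le_sum fun t ht => ?_
  refine mul_le_mul_of_nonneg_right ?_ (hw t).le
  have h1 : (M.P ^ n) s t = (M.P ^ n) s t * M.P t t := by
    show (M.P ^ n) s t = (M.P ^ n) s t * M.δ t t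
    rw [M.absorbing t ht, mul_one]
  rw [h1]
  exact Finset.single_le_sum
    (fun k _ => mul_nonneg (Ppow_nonneg M n s k) (M.nonneg k t)) (Finset.mem_univ t)

lemma gT_bdd {W : ℝ} (hW0 : 0 ≤ W) (hW : ∀ a : S, w a ≤ W) (n : ℕ) (s : S) :
    gT M w n s ≤ W := by
  calc gT M w n s ≤ ∑ t ∈ M.T, (M.P ^ n) s t * W :=
        Finset.sum_le_sum fun t _ => mul_le_mul_of_nonneg_left (hW t) (Ppow_nonneg M n s t)
    _ = (∑ t ∈ M.T, (M.P ^ n) s t) * W := by rw [Finset.sum_mul]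
    _ ≤ 1 * W := by
        refine mul_le_mul_of_nonneg_right ?_ hW0
        rw [← Ppow_rowsum M n s]
        exact Finset.sum_le_sum_of_subset_of_nonneg (Finset.subset_univ _)
          (fun k _ _ => Ppow_nonneg M n s k)
    _ = W := one_mul W

lemma reach_tendsto (hw : ∀ a : S, 0 < w a) (s : S) :
    Filter.Tendsto (fun n => gT M w n s) Filter.atTop (nhds (M.reachVal w s)) := by
  rw [reachVal_eq]
  refine tendsto_atTop_ciSup (gT_mono M w hw s) ?_
  obtain ⟨W, hW0, hW⟩ := w_bdd w hw
  exact ⟨W, by rintro x ⟨n, rfl⟩; exact gT_bdd M w hW0 hW n s⟩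

lemma reach_fix (hw : ∀ a : S, 0 < w a) (s : S) :
    M.reachVal w s = ∑ k : S, M.δ s k * M.reachVal w k := by
  have h1 := reach_tendsto M w hw s
  have h2 : Filter.Tendsto (fun n => ∑ k : S, M.δ s k * gT M w n k)
      Filter.atTop (nhds (M.reachVal w s)) := by
    have := h1.comp (Filter.tendsto_add_atTop_nat 1)
    simpa [Function.comp_def, gT_succ] using this
  have h3 : Filter.Tendsto (fun n => ∑ k : S, M.δ s k * gT M w n k)
      Filter.atTop (nhds (∑ k : S, M.δ s k * M.reachVal w k)) :=
    tendsto_finset_sum _ fun k _ => (reach_tendsto M w hw k).const_mul _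
  exact tendsto_nhds_unique h2 h3

end Vals


section Fix

variable (M : MC S) (w : S → ℝ)

lemma fNT_T {s : S} (hs : s ∈ M.T) (n : ℕ) : fNT M w n s = 0 := by
  refine Finset.sum_eq_zero fun s' hs' => ?_
  rw [Ppow_T M hs, if_neg, zero_mul]
  rintro rfl
  exact (Finset.mem_filter.mp hs').2 hs

lemma gT_T {s : S} (hs : s ∈ M.T) (n : ℕ) : gT M w n s = w s := by
  unfold gT
  rw [Finset.sum_eq_single s]
  · rw [Ppow_T M hs, if_pos rfl, one_mul]
  · intro t _ hts; rw [Ppow_T M hs, if_neg hts, zero_mul]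
  · intro h; exact absurd hs h

lemma reachVal_T {s : S} (hs : s ∈ M.T) : M.reachVal w s = w s := by
  rw [reachVal_eq]
  simp only [gT_T M w hs]
  exact ciSup_const

lemma sspVal_T {s : S} (hs : s ∈ M.T) : M.sspVal w s = w s := by
  rw [sspVal_eq]
  have h : (∑' n : ℕ, fNT M w n s) = 0 := by simp [fNT_T M w hs]
  rw [h, reachVal_T M w hs, zero_add]

lemma fNT_zero {s : S} (hs : s ∉ M.T) : fNT M w 0 s = w s := by
  unfold fNT
  simp only [pow_zero, Matrix.one_apply, ite_mul, one_mul, zero_mul]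
  rw [Finset.sum_ite_eq]
  simp [hs]

lemma F_fix [Nonempty S] (hreach : ∀ a : S, reaches M.edge (M.T : Set S) a)
    (hw : ∀ a : S, 0 < w a) {s : S} (hs : s ∉ M.T) :
    (∑' n, fNT M w n s) = w s + ∑ k : S, M.δ s k * ∑' n, fNT M w n k := by
  rw [Summable.tsum_eq_zero_add (fNT_summable M w hw hreach s), fNT_zero M w hs]
  congr 1
  calc ∑' n, fNT M w (n + 1) s = ∑' n, ∑ k : S, M.δ s k * fNT M w n k := by
        simp only [fNT_succ]
    _ = ∑ k : S, ∑' n, M.δ s k * fNT M w n k :=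
        Summable.tsum_finsetSum fun k _ => (fNT_summable M w hw hreach k).mul_left _
    _ = ∑ k : S, M.δ s k * ∑' n, fNT M w n k :=
        Finset.sum_congr rfl fun k _ => tsum_mul_left

lemma ssp_fix [Nonempty S] (hreach : ∀ a : S, reaches M.edge (M.T : Set S) a)
    (hw : ∀ a : S, 0 < w a) : M.sspUpdate w (M.sspVal w) = M.sspVal w := by
  funext s
  unfold MC.sspUpdate
  by_cases hs : s ∈ M.T
  · rw [if_pos hs, sspVal_T M w hs]
  · rw [if_neg hs, sspVal_eq M w s, F_fix M w hreach hw hs, reach_fix M w hw s,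
      add_assoc, ← Finset.sum_add_distrib]
    congr 1
    refine Finset.sum_congr rfl fun k _ => ?_
    rw [sspVal_eq, mul_add]

lemma ssp_unique [Nonempty S] (hreach : ∀ a : S, reaches M.edge (M.T : Set S) a)
    (hw : ∀ a : S, 0 < w a) (v : S → ℝ) (hv : M.sspUpdate w v = v) :
    v = M.sspVal w := by
  set u := M.sspVal w with hu
  have hufix : M.sspUpdate w u = u := ssp_fix M w hreach hw
  set d : S → ℝ := fun s => v s - u s with hd
  have hdT : ∀ s ∈ M.T, d s = 0 := by
    intro s hs
    have h1 : w s = v s := by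
      have h := congrFun hv s
      unfold MC.sspUpdate at h
      rwa [if_pos hs] at h
    have h2 : w s = u s := by
      have h := congrFun hufix s
      unfold MC.sspUpdate at h
      rwa [if_pos hs] at h
    show v s - u s = 0
    rw [← h1, ← h2, sub_self]
  have hdrec : ∀ s, s ∉ M.T → d s = ∑ k : S, M.δ s k * d k := by
    intro s hs
    have h1 : w s + ∑ k : S, M.δ s k * v k = v s := by
      have h := congrFun hv s
      unfold MC.sspUpdate at h
      rwa [if_neg hs] at h
    have h2 : w s + ∑ k : S, M.δ s k * u k = u s := by
      have h := congrFun hufix s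
      unfold MC.sspUpdate at h
      rwa [if_neg hs] at h
    show v s - u s = ∑ k : S, M.δ s k * (v k - u k)
    rw [← h1, ← h2]
    rw [Finset.sum_congr rfl fun (k : S) _ => mul_sub (M.δ s k) (v k) (u k),
      Finset.sum_sub_distrib]
    ring
  set D : ℝ := ∑ a : S, |d a| with hD'
  have hD : ∀ s, |d s| ≤ D :=
    fun s => Finset.single_le_sum (fun a _ => abs_nonneg (d a)) (Finset.mem_univ s)
  have hD0 : 0 ≤ D := Finset.sum_nonneg fun a _ => abs_nonneg _
  have key : ∀ n (s : S), |d s| ≤ D * Q M n s := by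
    intro n
    induction n with
    | zero =>
      intro s
      by_cases hs : s ∈ M.T
      · rw [hdT s hs, abs_zero]; exact mul_nonneg hD0 (Q_nonneg M 0 s)
      · rw [Q_zero M hs, mul_one]; exact hD s
    | succ n ih =>
      intro s
      by_cases hs : s ∈ M.T
      · rw [hdT s hs, abs_zero]; exact mul_nonneg hD0 (Q_nonneg M _ s)
      · rw [hdrec s hs]
        calc |∑ k : S, M.δ s k * d k| ≤ ∑ k : S, |M.δ s k * d k| :=
              Finset.abs_sum_le_sum_abs _ _
          _ = ∑ k : S, M.δ s k * |d k| := Finset.sum_congr rfl fun k _ => by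
              rw [abs_mul, abs_of_nonneg (M.nonneg s k)]
          _ ≤ ∑ k : S, M.δ s k * (D * Q M n k) := Finset.sum_le_sum fun k _ =>
              mul_le_mul_of_nonneg_left (ih k) (M.nonneg s k)
          _ = D * Q M (n + 1) s := by
              rw [Q_succ, Finset.mul_sum]
              exact Finset.sum_congr rfl fun k _ => by ring
  funext s
  have h0 : |d s| ≤ 0 := by
    have ht : Filter.Tendsto (fun n => D * Q M n s) Filter.atTop (nhds 0) := by
      simpa using (Q_tendsto_zero M hreach s).const_mul D
    exact ge_of_tendsto ht (Filter.Eventually.of_forall fun n => key n s)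
  have hds : d s = 0 := abs_eq_zero.mp (le_antisymm h0 (abs_nonneg _))
  exact sub_eq_zero.mp hds

end Fix

end SSP16

/-- If every state can reach `T` and weights are strictly positive,
then the SSP Bellman update has a unique fixpoint, and it equals the stochastic
shortest path value vector. -/
theorem stmt_16 {S : Type} [Fintype S] [DecidableEq S] [Nonempty S]
    (M : MC S) (hreach : ∀ a : S, reaches M.edge (M.T : Set S) a)
    (w : S → ℝ) (hw : ∀ a : S, 0 < w a) :
    ∀ v : S → ℝ, M.sspUpdate w v = v ↔ v = M.sspVal w := by
  intro v
  constructor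
  · intro hv
    exact SSP16.ssp_unique M w hreach hw v hv
  · rintro rfl
    exact SSP16.ssp_fix M w hreach hw
end
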